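/- arXiv:0808.3494 — 6 statements merged into one kernel-verified Lean document; each statement's English description precedes it below -/
import Mathlib

section
/- Let (f_n) be a sequence in D such that ∑_{x∈ℕ*} f_n(x)² γ(x) → 0 as n → ∞, and such that E(f_n − f_m, f_n − f_m) → 0 as n, m → ∞. Then f_n(∞) → 0 and E(f_n, f_n) → 0 as n → ∞; in other words, the form (E, D) is complete (closed) on L²(ℕ̄*, γ). -/
open Filter Topology

private lemma aux_sq_tendsto (u : ℕ → ℝ) (h : Tendsto (fun n => (u n) ^ 2) atTop (𝓝 0)) :
    Tendsto u atTop (𝓝 0) := by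
  rw [tendsto_zero_iff_abs_tendsto_zero]
  have h2 : Tendsto (fun n => Real.sqrt ((u n) ^ 2)) atTop (𝓝 (Real.sqrt 0)) :=
    (Real.continuous_sqrt.tendsto 0).comp h
  simpa [Real.sqrt_sq_eq_abs, Function.comp_def] using h2

/-- completeness (closedness) of the Dirichlet form `(E, D)` on `L²(ℕ̄*, γ)`.
The state space `ℕ̄* = ℕ* ∪ {∞}` is encoded by giving, for each `n`, the values
`f n : ℕ → ℝ` of the `n`-th function at the points of `ℕ*` (relabelled by `ℕ`) together with
its value `fInf n` at `∞`.  Membership in `D` is the summability of `x ↦ (f n x - fInf n)²`,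
and `E(g, g) = ∑_x (g x - g ∞)²`. -/
theorem stmt_0 (γ : ℕ → ℝ) (hγpos : ∀ x, 0 < γ x) (hγsum : Summable γ)
    (f : ℕ → ℕ → ℝ) (fInf : ℕ → ℝ)
    (hD : ∀ n, Summable fun x => (f n x - fInf n) ^ 2)
    (hL2 : Tendsto (fun n => ∑' x : ℕ, (f n x) ^ 2 * γ x) atTop (𝓝 0))
    (hCauchy : ∀ ε : ℝ, 0 < ε → ∃ N : ℕ, ∀ n ≥ N, ∀ m ≥ N,
      (∑' x : ℕ, ((f n x - fInf n) - (f m x - fInf m)) ^ 2) < ε) :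
    Tendsto fInf atTop (𝓝 0) ∧
      Tendsto (fun n => ∑' x : ℕ, (f n x - fInf n) ^ 2) atTop (𝓝 0) := by
  set g : ℕ → ℕ → ℝ := fun n x => f n x - fInf n with hg
  -- γ is bounded by its total sum
  have hγle : ∀ x, γ x ≤ ∑' y, γ y := fun x =>
    Summable.le_tsum hγsum x (fun j _ => (hγpos j).le)
  -- summability of the weighted squares
  have hfγ : ∀ n, Summable fun x => (f n x) ^ 2 * γ x := by
    intro n
    refine Summable.of_nonneg_of_le
      (fun x => mul_nonneg (sq_nonneg _) (hγpos x).le) ?_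
      ((((hD n).mul_left (2 * (∑' y, γ y)))).add (hγsum.mul_left (2 * (fInf n) ^ 2)))
    intro x
    have h1 := hγle x
    have h2 := (hγpos x).le
    try simp only [hg]
    nlinarith [sq_nonneg (f n x - fInf n - fInf n), sq_nonneg (f n x - fInf n),
      mul_le_mul_of_nonneg_left h1 (mul_nonneg two_pos.le (sq_nonneg (f n x - fInf n))),
      mul_nonneg (sq_nonneg (fInf n)) h2, mul_nonneg (sq_nonneg (f n x - fInf n)) h2]
  -- pointwise convergence f n x → 0
  have hfx : ∀ x, Tendsto (fun n => f n x) atTop (𝓝 0) := by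
    intro x
    apply aux_sq_tendsto
    have hsq : Tendsto (fun n => (f n x) ^ 2 * γ x) atTop (𝓝 0) := by
      apply squeeze_zero (fun n => mul_nonneg (sq_nonneg _) (hγpos x).le)
        (fun n => Summable.le_tsum (hfγ n) x (fun j _ => mul_nonneg (sq_nonneg _) (hγpos j).le)) hL2
    have := hsq.mul_const (γ x)⁻¹
    simpa [mul_assoc, mul_inv_cancel₀ (hγpos x).ne'] using this
  -- summability of differences
  have hdiff : ∀ n m, Summable fun x => (g n x - g m x) ^ 2 := by
    intro n m
    refine Summable.of_nonneg_of_le (fun x => sq_nonneg _) ?_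
      (((hD n).mul_left 2).add ((hD m).mul_left 2))
    intro x; simp only [hg]; nlinarith [sq_nonneg (f n x - fInf n + (f m x - fInf m))]
  -- fInf is a Cauchy sequence
  have hcau : CauchySeq fInf := by
    rw [Metric.cauchySeq_iff]
    intro ε hε
    have hε3 : (0:ℝ) < ε / 3 := by linarith
    obtain ⟨N1, hN1⟩ := hCauchy ((ε / 3) ^ 2) (by positivity)
    obtain ⟨N2, hN2⟩ := (Metric.tendsto_atTop.mp (hfx 0)) (ε / 3) hε3
    refine ⟨max N1 N2, fun m hm n hn => ?_⟩
    have hgnm : |g m 0 - g n 0| < ε / 3 := by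
      have h1 : (g m 0 - g n 0) ^ 2 ≤ ∑' x, (g m x - g n x) ^ 2 :=
        Summable.le_tsum (hdiff m n) 0 (fun j _ => sq_nonneg _)
      have h2 := hN1 m (le_trans (le_max_left _ _) hm) n (le_trans (le_max_left _ _) hn)
      have h3 : (g m 0 - g n 0) ^ 2 < (ε / 3) ^ 2 := lt_of_le_of_lt h1 h2
      exact lt_of_pow_lt_pow_left₀ 2 hε3.le (by rw [sq_abs]; exact h3)
    have hfm : |f m 0| < ε / 3 := by
      simpa [Real.dist_eq] using hN2 m (le_trans (le_max_right _ _) hm)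
    have hfn : |f n 0| < ε / 3 := by
      simpa [Real.dist_eq] using hN2 n (le_trans (le_max_right _ _) hn)
    rw [Real.dist_eq]
    have hrw : fInf m - fInf n = f m 0 - f n 0 - (g m 0 - g n 0) := by
      simp [hg]; ring
    rw [hrw]
    calc |f m 0 - f n 0 - (g m 0 - g n 0)| ≤ |f m 0| + |f n 0| + |g m 0 - g n 0| := by
          have := abs_sub (f m 0 - f n 0) (g m 0 - g n 0)
          have := abs_sub_abs_le_abs_sub (f m 0) (f n 0)
          calc |f m 0 - f n 0 - (g m 0 - g n 0)| ≤ |f m 0 - f n 0| + |g m 0 - g n 0| :=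
                abs_sub _ _
            _ ≤ |f m 0| + |f n 0| + |g m 0 - g n 0| := by
                have := abs_sub_abs_le_abs_sub (f m 0) (f n 0)
                have h := abs_sub (f m 0) (f n 0)
                linarith [abs_sub (f m 0) (f n 0)]
      _ < ε / 3 + ε / 3 + ε / 3 := by linarith
      _ = ε := by ring
  obtain ⟨c, hc⟩ := cauchySeq_tendsto_of_complete hcau
  -- pointwise convergence g n x → -c
  have hgx : ∀ x, Tendsto (fun n => g n x) atTop (𝓝 (-c)) := by
    intro x
    have := (hfx x).sub hc
    simpa [hg, zero_sub] using this
  -- key finite-sum bound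
  have key : ∀ ε : ℝ, 0 < ε → ∃ N : ℕ, ∀ n ≥ N, ∀ S : Finset ℕ,
      ∑ x ∈ S, (g n x + c) ^ 2 ≤ ε := by
    intro ε hε
    obtain ⟨N, hN⟩ := hCauchy ε hε
    refine ⟨N, fun n hn S => ?_⟩
    have htend : Tendsto (fun m => ∑ x ∈ S, (g n x - g m x) ^ 2) atTop
        (𝓝 (∑ x ∈ S, (g n x + c) ^ 2)) := by
      apply tendsto_finset_sum
      intro x _
      have : Tendsto (fun m => g n x - g m x) atTop (𝓝 (g n x - (-c))) :=
        tendsto_const_nhds.sub (hgx x)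
      simpa [sub_neg_eq_add] using this.pow 2
    apply le_of_tendsto htend
    filter_upwards [eventually_ge_atTop N] with m hm
    have h1 : ∑ x ∈ S, (g n x - g m x) ^ 2 ≤ ∑' x, (g n x - g m x) ^ 2 :=
      Summable.sum_le_tsum S (fun x _ => sq_nonneg _) (hdiff n m)
    exact h1.trans (hN n hn m hm).le
  -- c = 0
  have hc0 : c = 0 := by
    by_contra hne
    have hc2 : (0:ℝ) < c ^ 2 := by positivity
    obtain ⟨N, hN⟩ := key 1 one_pos
    set T := ∑' x, (g N x) ^ 2 with hT
    have hB : ∀ K : ℕ, (K : ℝ) * c ^ 2 ≤ 2 + 2 * T := by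
      intro K
      have h1 := hN N le_rfl (Finset.range K)
      have h2 : ∑ x ∈ Finset.range K, (g N x) ^ 2 ≤ T :=
        Summable.sum_le_tsum _ (fun x _ => sq_nonneg _) (hD N)
      have h3 : (K : ℝ) * c ^ 2 =
          ∑ x ∈ Finset.range K, c ^ 2 := by simp [mul_comm]
      rw [h3]
      have h4 : ∀ x ∈ Finset.range K,
          c ^ 2 ≤ 2 * (g N x + c) ^ 2 + 2 * (g N x) ^ 2 := by
        intro x _; nlinarith [sq_nonneg (g N x + c + g N x)]
      calc ∑ x ∈ Finset.range K, c ^ 2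
          ≤ ∑ x ∈ Finset.range K, (2 * (g N x + c) ^ 2 + 2 * (g N x) ^ 2) :=
            Finset.sum_le_sum h4
        _ = 2 * (∑ x ∈ Finset.range K, (g N x + c) ^ 2)
              + 2 * ∑ x ∈ Finset.range K, (g N x) ^ 2 := by
            rw [Finset.sum_add_distrib, Finset.mul_sum, Finset.mul_sum]
        _ ≤ 2 * 1 + 2 * T := by
            have := hN N le_rfl (Finset.range K)
            gcongr
        _ = 2 + 2 * T := by ring
    obtain ⟨K, hK⟩ := exists_nat_gt ((2 + 2 * T) / c ^ 2)
    have := hB K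
    have : (2 + 2 * T) / c ^ 2 * c ^ 2 < (K : ℝ) * c ^ 2 := by
      exact mul_lt_mul_of_pos_right hK hc2
    rw [div_mul_cancel₀ _ hc2.ne'] at this
    linarith [hB K]
  subst hc0
  refine ⟨hc, ?_⟩
  -- E(f_n, f_n) → 0
  rw [Metric.tendsto_atTop]
  intro ε hε
  obtain ⟨N, hN⟩ := key (ε / 2) (by linarith)
  refine ⟨N, fun n hn => ?_⟩
  have h1 : ∑' x, (g n x) ^ 2 ≤ ε / 2 := by
    apply Summable.tsum_le_of_sum_le (hD n)
    intro S
    simpa using hN n hn S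
  have h2 : (0:ℝ) ≤ ∑' x, (g n x) ^ 2 := tsum_nonneg (fun x => sq_nonneg _)
  rw [Real.dist_eq]
  rw [abs_of_nonneg (by simpa [hg] using h2)]
  have : ∑' x, (f n x - fInf n) ^ 2 = ∑' x, (g n x) ^ 2 := by simp [hg]
  rw [this]; linarith
end

section
/- Fix λ > 0, a finite nonempty set A ⊂ ℕ* with |A| = n, and f : A → ℝ. Among all u ∈ D with u(x) = f(x) for every x ∈ A, the quantity ∑_{x∈ℕ*} (u(x) − u(∞))² + λ ∑_{x∈ℕ*} γ(x) u(x)² is uniquely minimized by the function u* determined by u*(∞) = (∑_{x∈A} f(x)) / (n + ∑_{x∈ℕ*∖A} λγ(x)/(1 + λγ(x))) and u*(y) = u*(∞)/(1 + λγ(y)) for every y ∈ ℕ* ∖ A. -/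
open scoped ENNReal

/-- The quantity `∑_{x∈ℕ*} (u(x) − u(∞))² + λ ∑_{x∈ℕ*} γ(x) u(x)²`, computed in `ℝ≥0∞`
so that it is well defined (possibly infinite) for every `u`.  Here `u : ℕ → ℝ` is the
restriction of the function to the finite points and `uInf` its value at `∞`. -/
noncomputable def energy (γ : ℕ → ℝ) (lam : ℝ) (u : ℕ → ℝ) (uInf : ℝ) : ℝ≥0∞ :=
  ∑' x : ℕ, ENNReal.ofReal ((u x - uInf) ^ 2 + lam * γ x * (u x) ^ 2)

/-- The value at `∞` of the minimizer of Lemma 2.6. -/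
noncomputable def uStarInf (γ : ℕ → ℝ) (lam : ℝ) (A : Finset ℕ) (n : ℕ) (f : ℕ → ℝ) : ℝ :=
  (∑ x ∈ A, f x) /
    (n + ∑' x : ℕ, if x ∈ A then 0 else lam * γ x / (1 + lam * γ x))

/-- The minimizer of Lemma 2.6: it equals `f` on `A` and `u*(∞)/(1 + λγ(y))` off `A`. -/
noncomputable def uStar (γ : ℕ → ℝ) (lam : ℝ) (A : Finset ℕ) (n : ℕ) (f : ℕ → ℝ)
    (y : ℕ) : ℝ :=
  if y ∈ A then f y else uStarInf γ lam A n f / (1 + lam * γ y)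

/-- A function equal off a finite set to a summable function is summable. -/
lemma summable_congr_off {f g : ℕ → ℝ} (s : Finset ℕ)
    (h : ∀ x ∉ s, f x = g x) (hg : Summable g) : Summable f := by
  have h1 : Summable (fun x => f x - g x) :=
    summable_of_ne_finset_zero (s := s) (fun x hx => by rw [h x hx]; ring)
  have h2 := h1.add hg
  refine h2.congr fun x => by ring

/-- among all `u ∈ D` with `u = f` on the finite set `A` (of cardinality `n`),
the quantity `∑_x (u(x) − u(∞))² + λ ∑_x γ(x) u(x)²` is uniquely minimized by the function
`u*` with `u*(∞) = (∑_{x∈A} f(x)) / (n + ∑_{x∉A} λγ(x)/(1+λγ(x)))` and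
`u*(y) = u*(∞)/(1 + λγ(y))` for `y ∉ A`. -/
theorem stmt_3 (γ : ℕ → ℝ) (hγpos : ∀ x, 0 < γ x) (hγsum : Summable γ)
    (lam : ℝ) (hlam : 0 < lam)
    (A : Finset ℕ) (hA : A.Nonempty) (n : ℕ) (hn : A.card = n) (f : ℕ → ℝ) :
    ∀ (u : ℕ → ℝ) (uInf : ℝ), (∀ x ∈ A, u x = f x) →
      (Summable fun x => (u x - uInf) ^ 2) →
      energy γ lam (uStar γ lam A n f) (uStarInf γ lam A n f) ≤ energy γ lam u uInf ∧
      (energy γ lam u uInf = energy γ lam (uStar γ lam A n f) (uStarInf γ lam A n f) →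
        u = uStar γ lam A n f ∧ uInf = uStarInf γ lam A n f) := by
  intro u c hfA hsum
  have hbpos : ∀ x, 0 < lam * γ x := fun x => mul_pos hlam (hγpos x)
  have h1b : ∀ x, 0 < 1 + lam * γ x := fun x => by have := hbpos x; linarith
  -- the weight s x = λγ/(1+λγ)
  have hspos : ∀ x, 0 < lam * γ x / (1 + lam * γ x) :=
    fun x => div_pos (hbpos x) (h1b x)
  have hsle : ∀ x, lam * γ x / (1 + lam * γ x) ≤ lam * γ x := fun x => by
    rw [div_le_iff₀ (h1b x)]; nlinarith [hbpos x, sq_nonneg (lam * γ x)]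
  have hsumb : Summable (fun x => lam * γ x) := hγsum.mul_left lam
  have hsums : Summable (fun x => lam * γ x / (1 + lam * γ x)) :=
    Summable.of_nonneg_of_le (fun x => (hspos x).le) hsle hsumb
  have hsumsA : Summable (fun x => if x ∈ A then 0 else lam * γ x / (1 + lam * γ x)) := by
    refine Summable.of_nonneg_of_le (fun x => ?_) (fun x => ?_) hsums
    · split_ifs; exacts [le_refl 0, (hspos x).le]
    · split_ifs; exacts [(hspos x).le, le_refl _]
  set S : ℝ := ∑' x, (if x ∈ A then 0 else lam * γ x / (1 + lam * γ x)) with hS_def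
  have hS0 : 0 ≤ S := tsum_nonneg fun x => by split_ifs; exacts [le_refl 0, (hspos x).le]
  have hn1 : (1:ℝ) ≤ n := by
    have := Finset.card_pos.2 hA
    rw [hn] at this; exact_mod_cast this
  have hnS : (0:ℝ) < n + S := by linarith
  set cs : ℝ := uStarInf γ lam A n f with hcs_def
  have hcs_eq : cs * ((n:ℝ) + S) = ∑ x ∈ A, f x := by
    rw [hcs_def, uStarInf, ← hS_def]
    exact div_mul_cancel₀ _ hnS.ne'
  -- the minimizer off A
  have hustar : ∀ x ∉ A, uStar γ lam A n f x = cs / (1 + lam * γ x) := by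
    intro x hx; rw [uStar, if_neg hx, hcs_def]
  have hustarA : ∀ x ∈ A, uStar γ lam A n f x = f x := by
    intro x hx; rw [uStar, if_pos hx]
  -- term functions
  set F : ℕ → ℝ := fun x => (u x - c) ^ 2 + lam * γ x * (u x) ^ 2 with hF_def
  set G : ℕ → ℝ := fun x =>
    (uStar γ lam A n f x - cs) ^ 2 + lam * γ x * (uStar γ lam A n f x) ^ 2 with hG_def
  have hF0 : ∀ x, 0 ≤ F x := fun x =>
    add_nonneg (sq_nonneg _) (mul_nonneg (hbpos x).le (sq_nonneg _))
  have hG0 : ∀ x, 0 ≤ G x := fun x =>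
    add_nonneg (sq_nonneg _) (mul_nonneg (hbpos x).le (sq_nonneg _))
  -- F is summable
  set T : ℝ := ∑' x, (u x - c) ^ 2 with hT_def
  have hTle : ∀ x, (u x - c) ^ 2 ≤ T := fun x => Summable.le_tsum hsum x fun j _ => sq_nonneg _
  have hsumF : Summable F := by
    refine Summable.of_nonneg_of_le hF0 (fun x => ?_)
      (hsum.add (hsumb.mul_left (2 * T + 2 * c ^ 2)))
    have h1 : (u x) ^ 2 ≤ 2 * T + 2 * c ^ 2 := by
      nlinarith [hTle x, sq_nonneg (u x - 2 * c)]
    have h2 : lam * γ x * (u x) ^ 2 ≤ lam * γ x * (2 * T + 2 * c ^ 2) :=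
      mul_le_mul_of_nonneg_left h1 (hbpos x).le
    simp only [hF_def]
    nlinarith [h2]
  -- G off A
  have hGoff : ∀ x ∉ A, G x = cs ^ 2 * (lam * γ x / (1 + lam * γ x)) := by
    intro x hx
    simp only [hG_def, hustar x hx]
    have := (h1b x).ne'
    field_simp
    ring
  have hsumG : Summable G :=
    summable_congr_off A hGoff (hsums.mul_left (cs ^ 2))
  -- cross terms
  set P : ℕ → ℝ := fun x => if x ∈ A then
      (2 * (f x - cs) * (cs - c) - 2 * (lam * γ x / (1 + lam * γ x)) * cs * (c - cs))
    else 0 with hP_def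
  set Q : ℕ → ℝ := fun x => 2 * cs * (c - cs) * (lam * γ x / (1 + lam * γ x)) with hQ_def
  have hsumP : Summable P :=
    summable_of_ne_finset_zero (s := A) (fun x hx => by simp [hP_def, hx])
  have hsumQ : Summable Q := hsums.mul_left _
  -- the tsum of s splits
  have hs_split : ∑' x, lam * γ x / (1 + lam * γ x)
      = (∑ x ∈ A, lam * γ x / (1 + lam * γ x)) + S := by
    have h1 : (fun x => lam * γ x / (1 + lam * γ x))
        = (fun x => (if x ∈ A then lam * γ x / (1 + lam * γ x) else 0)
            + (if x ∈ A then 0 else lam * γ x / (1 + lam * γ x))) := by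
      funext x; split_ifs <;> ring
    have h2 : Summable (fun x => if x ∈ A then lam * γ x / (1 + lam * γ x) else 0) :=
      summable_of_ne_finset_zero (s := A) (fun x hx => by simp [hx])
    rw [h1, Summable.tsum_add h2 hsumsA, ← hS_def,
      tsum_eq_sum (s := A) (f := fun x => if x ∈ A then lam * γ x / (1 + lam * γ x) else 0)
        (fun x hx => by simp [hx])]
    congr 1
    exact Finset.sum_congr rfl fun x hx => by simp [hx]
  have hcross0 : ∑' x, (P x + Q x) = 0 := by
    rw [Summable.tsum_add hsumP hsumQ, hQ_def]
    rw [tsum_eq_sum (s := A) (f := P) (fun x hx => by simp [hP_def, hx])]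
    have hQs : ∑' x, 2 * cs * (c - cs) * (lam * γ x / (1 + lam * γ x))
        = 2 * cs * (c - cs) * ((∑ x ∈ A, lam * γ x / (1 + lam * γ x)) + S) := by
      rw [tsum_mul_left, hs_split]
    rw [hQs]
    have hPA : ∑ x ∈ A, P x
        = 2 * (cs - c) * ((∑ x ∈ A, f x) - n * cs)
          - 2 * cs * (c - cs) * (∑ x ∈ A, lam * γ x / (1 + lam * γ x)) := by
      have e1 : ∑ x ∈ A, P x
          = (∑ x ∈ A, (2 * (cs - c)) * (f x - cs))
            - ∑ x ∈ A, (2 * cs * (c - cs)) * (lam * γ x / (1 + lam * γ x)) := by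
        rw [← Finset.sum_sub_distrib]
        refine Finset.sum_congr rfl fun x hx => by simp only [hP_def, if_pos hx]; ring
      rw [e1, ← Finset.mul_sum, ← Finset.mul_sum, Finset.sum_sub_distrib,
        Finset.sum_const, nsmul_eq_mul, hn]
      try ring
    rw [hPA]
    linear_combination (-(2 * (cs - c))) * hcs_eq
  -- the nonnegative remainder
  set E : ℕ → ℝ := fun x => F x - G x - (P x + Q x) with hE_def
  have hE_A : ∀ x ∈ A, E x = (cs - c) ^ 2 := by
    intro x hx
    simp only [hE_def, hF_def, hG_def, hP_def, hQ_def, if_pos hx, hfA x hx, hustarA x hx]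
    ring
  have hE_nA : ∀ x ∉ A, E x
      = (1 + lam * γ x) * (u x - c / (1 + lam * γ x)) ^ 2
        + (lam * γ x / (1 + lam * γ x)) * (c - cs) ^ 2 := by
    intro x hx
    have hG' := hGoff x hx
    simp only [hE_def, hF_def, hP_def, hQ_def, if_neg hx, hG']
    have hne := (h1b x).ne'
    field_simp
    ring
  have hE0 : ∀ x, 0 ≤ E x := by
    intro x
    by_cases hx : x ∈ A
    · rw [hE_A x hx]; exact sq_nonneg _
    · rw [hE_nA x hx]
      exact add_nonneg (mul_nonneg (h1b x).le (sq_nonneg _))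
        (mul_nonneg (hspos x).le (sq_nonneg _))
  have hsumE : Summable E := (hsumF.sub hsumG).sub (hsumP.add hsumQ)
  have hFG : ∑' x, F x - ∑' x, G x = ∑' x, E x := by
    have h1 : ∑' x, E x = ∑' x, (F x - G x) - ∑' x, (P x + Q x) :=
      Summable.tsum_sub (hsumF.sub hsumG) (hsumP.add hsumQ)
    rw [hcross0, sub_zero, Summable.tsum_sub hsumF hsumG] at h1
    exact h1.symm
  have hEnonneg : 0 ≤ ∑' x, E x := tsum_nonneg hE0
  -- energies as ofReal of real tsums
  have hEF : energy γ lam u c = ENNReal.ofReal (∑' x, F x) := by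
    rw [energy]
    exact (ENNReal.ofReal_tsum_of_nonneg hF0 hsumF).symm
  have hEG : energy γ lam (uStar γ lam A n f) cs = ENNReal.ofReal (∑' x, G x) := by
    rw [energy]
    exact (ENNReal.ofReal_tsum_of_nonneg hG0 hsumG).symm
  constructor
  · rw [hEF, hEG]
    exact ENNReal.ofReal_le_ofReal (by linarith)
  · intro heq
    rw [hEF, hEG] at heq
    have hFGeq : ∑' x, F x = ∑' x, G x :=
      (ENNReal.ofReal_eq_ofReal_iff (tsum_nonneg hF0) (tsum_nonneg hG0)).1 heq
    have hEzero : ∑' x, E x = 0 := by linarith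
    have hEeach : ∀ x, E x = 0 := by
      intro x
      have hle : E x ≤ ∑' y, E y := Summable.le_tsum hsumE x fun j _ => hE0 j
      rw [hEzero] at hle
      exact le_antisymm hle (hE0 x)
    obtain ⟨a, ha⟩ := hA
    have hccs : c = cs := by
      have h0 := hEeach a
      rw [hE_A a ha] at h0
      have := sq_eq_zero_iff.1 h0
      linarith
    refine ⟨funext fun x => ?_, hccs⟩
    by_cases hx : x ∈ A
    · rw [hfA x hx, hustarA x hx]
    · have h0 := hEeach x
      rw [hE_nA x hx] at h0
      have t1 : 0 ≤ (1 + lam * γ x) * (u x - c / (1 + lam * γ x)) ^ 2 :=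
        mul_nonneg (h1b x).le (sq_nonneg _)
      have t2 : 0 ≤ (lam * γ x / (1 + lam * γ x)) * (c - cs) ^ 2 :=
        mul_nonneg (hspos x).le (sq_nonneg _)
      have t3 : (1 + lam * γ x) * (u x - c / (1 + lam * γ x)) ^ 2 = 0 := by linarith
      have t4 : (u x - c / (1 + lam * γ x)) ^ 2 = 0 := by
        rcases mul_eq_zero.1 t3 with h | h
        · exact absurd h (h1b x).ne'
        · exact h
      have t5 : u x = c / (1 + lam * γ x) := by
        have := sq_eq_zero_iff.1 t4; linarith
      rw [t5, hccs, hustar x hx]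
end

section
/- For every α ∈ (0,1) and every θ > 0: ∫₀^∞ (1+t)^{−2} Λ⁰(θt) dt = c(θ), where Λ⁰(u) = (sin(πα)/π) ∫_{u/(1+u)}^{1} s^{−α}(1−s)^{α−1} ds for u ≥ 0, and c(θ) = (∫₀^∞ (w/(1+w))(w/(θ+w)) w^{−1−α} dw) / (∫₀^∞ (w/(1+w)) w^{−1−α} dw). -/
open MeasureTheory Set Real
open scoped ENNReal

/-- The distribution function of the generalized arcsine law with parameter `α`. -/
noncomputable def arcsineCDF (α u : ℝ) : ℝ :=
  (Real.sin (Real.pi * α) / Real.pi) *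
    ∫ s in Set.Ioo (u / (1 + u)) 1, s ^ (-α) * (1 - s) ^ (α - 1)

/-- The function `c(θ)` of the paper. -/
noncomputable def cFun (α θ : ℝ) : ℝ :=
  (∫ w in Set.Ioi (0:ℝ), (w / (1 + w)) * (w / (θ + w)) * w ^ (-1 - α)) /
    (∫ w in Set.Ioi (0:ℝ), (w / (1 + w)) * w ^ (-1 - α))


lemma map_eq (u : ℝ) (hu : 0 ≤ u) : (fun v : ℝ => v/(1+v)) '' Ioi u = Ioo (u/(1+u)) 1 := by
  ext y
  simp only [mem_image, mem_Ioi, mem_Ioo]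
  constructor
  · rintro ⟨v, hv, rfl⟩
    have hv0 : 0 < v := lt_of_le_of_lt hu hv
    have h1v : 0 < 1 + v := by linarith
    have h1u : 0 < 1 + u := by linarith
    refine ⟨by rw [div_lt_div_iff₀ h1u h1v]; nlinarith, by rw [div_lt_one h1v]; linarith⟩
  · rintro ⟨h1, h2⟩
    have h1u : 0 < 1 + u := by linarith
    have h1y : 0 < 1 - y := by linarith
    refine ⟨y/(1-y), ?_, ?_⟩
    · rw [lt_div_iff₀ h1y]
      nlinarith [(div_lt_iff₀ h1u).mp h1]
    · field_simp; ring

lemma subst_lemma (α : ℝ) (u : ℝ) (hu : 0 ≤ u) :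
    (∫ s in Ioo (u/(1+u)) 1, s ^ (-α) * (1 - s) ^ (α - 1))
      = ∫ v in Ioi u, v ^ (-α) * (1 + v)⁻¹ := by
  rw [← map_eq u hu,
    integral_image_eq_integral_abs_deriv_smul measurableSet_Ioi
      (f' := fun v => ((1+v)^2)⁻¹)
      (fun v hv => by
        have h1v : (1:ℝ) + v ≠ 0 := by
          have : 0 < v := lt_of_le_of_lt hu hv; positivity
        have := (hasDerivAt_id v).div ((hasDerivAt_const v (1:ℝ)).add (hasDerivAt_id v)) h1v
        convert this.hasDerivWithinAt using 1
        · rfl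
        · rfl
        · funext x; rfl
        · simp only [Pi.add_apply, id_eq]; ring)
      (fun x hx y hy hxy => by
        simp only [mem_Ioi] at hx hy
        have hx1 : (0:ℝ) < 1 + x := by have := lt_of_le_of_lt hu hx; linarith
        have hy1 : (0:ℝ) < 1 + y := by have := lt_of_le_of_lt hu hy; linarith
        field_simp at hxy
        linarith)]
  refine setIntegral_congr_fun measurableSet_Ioi (fun v hv => ?_)
  simp only [mem_Ioi] at hv
  have hv0 : 0 < v := lt_of_le_of_lt hu hv
  have h1v : (0:ℝ) < 1 + v := by linarith
  have h1 : 1 - v / (1 + v) = (1+v)⁻¹ := by field_simp; ring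
  have h2 : (v / (1+v)) ^ (-α) = v ^ (-α) * (1+v) ^ α := by
    rw [div_rpow hv0.le h1v.le, Real.rpow_neg hv0.le, Real.rpow_neg h1v.le]
    field_simp
  have h3 : ((1+v)⁻¹) ^ (α - 1) = (1+v) ^ (1 - α) := by
    rw [Real.inv_rpow h1v.le, ← Real.rpow_neg h1v.le, neg_sub]
  have h4 : (1+v) ^ α * (1+v) ^ (1 - α) = 1 + v := by
    rw [← Real.rpow_add h1v]; simp
  rw [smul_eq_mul, h1, h2, h3, abs_of_pos (by positivity)]
  have h5 : ((1+v)^2)⁻¹ * (v ^ (-α) * (1+v) ^ α * (1+v) ^ (1-α))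
      = v ^ (-α) * ((1+v) ^ α * (1+v) ^ (1-α) * ((1+v)^2)⁻¹) := by ring
  rw [h5, h4]
  have h6 : (1+v) * ((1+v)^2)⁻¹ = (1+v)⁻¹ := by
    field_simp
  rw [h6]



lemma h_meas (α : ℝ) : Measurable (fun v : ℝ => v ^ (-α) * (1+v)⁻¹) := by fun_prop

lemma h_integrable (α : ℝ) (hα : α ∈ Ioo (0:ℝ) 1) :
    IntegrableOn (fun v : ℝ => v ^ (-α) * (1+v)⁻¹) (Ioi 0) := by
  obtain ⟨hα0, hα1⟩ := hα
  have h1 : IntegrableOn (fun v : ℝ => v ^ (-α) * (1+v)⁻¹) (Ioc 0 1) := by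
    have hint : IntegrableOn (fun v : ℝ => v ^ (-α)) (Ioc 0 1) := by
      have := intervalIntegral.intervalIntegrable_rpow' (a := (0:ℝ)) (b := 1) (r := -α)
        (by linarith)
      simpa [intervalIntegrable_iff, uIoc_of_le (zero_le_one (α := ℝ))] using this
    refine hint.mono' ((h_meas α).aestronglyMeasurable.restrict) ?_
    filter_upwards [ae_restrict_mem measurableSet_Ioc] with v hv
    have hv0 : 0 < v := hv.1
    have h1v : (0:ℝ) < 1 + v := by linarith
    rw [norm_mul, norm_inv, Real.norm_rpow_of_nonneg hv0.le, Real.norm_of_nonneg hv0.le,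
      Real.norm_of_nonneg h1v.le]
    nlinarith [Real.rpow_pos_of_pos hv0 (-α), inv_le_one_of_one_le₀ (by linarith : (1:ℝ) ≤ 1+v),
      inv_pos.mpr h1v]
  have h2 : IntegrableOn (fun v : ℝ => v ^ (-α) * (1+v)⁻¹) (Ioi 1) := by
    have hint : IntegrableOn (fun v : ℝ => v ^ (-α-1)) (Ioi 1) :=
      integrableOn_Ioi_rpow_of_lt (by linarith) one_pos
    refine hint.mono' ((h_meas α).aestronglyMeasurable.restrict) ?_
    filter_upwards [ae_restrict_mem measurableSet_Ioi] with v hv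
    simp only [mem_Ioi] at hv
    have hv0 : (0:ℝ) < v := by linarith
    have h1v : (0:ℝ) < 1 + v := by linarith
    rw [norm_mul, norm_inv, Real.norm_rpow_of_nonneg hv0.le, Real.norm_of_nonneg hv0.le,
      Real.norm_of_nonneg h1v.le]
    have : v ^ (-α-1) = v ^ (-α) * v⁻¹ := by
      rw [Real.rpow_sub hv0, Real.rpow_one]; rfl
    rw [this]
    have hvα : 0 < v ^ (-α) := Real.rpow_pos_of_pos hv0 (-α)
    have : (1+v)⁻¹ ≤ v⁻¹ := by
      apply inv_anti₀ hv0; linarith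
    nlinarith [inv_pos.mpr h1v]
  have := h1.union h2
  rwa [Ioc_union_Ioi_eq_Ioi (zero_le_one (α := ℝ))] at this

lemma beta_val (α : ℝ) (hα : α ∈ Ioo (0:ℝ) 1) :
    (∫ s in Ioo (0:ℝ) 1, s ^ (-α) * (1 - s) ^ (α - 1)) = π / Real.sin (π * α) := by
  obtain ⟨hα0, hα1⟩ := hα
  have key : Complex.Gamma ((1-α:ℝ):ℂ) * Complex.Gamma ((α:ℝ):ℂ)
      = Complex.Gamma (((1-α:ℝ):ℂ) + ((α:ℝ):ℂ)) * Complex.betaIntegral ((1-α:ℝ):ℂ) ((α:ℝ):ℂ) :=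
    Complex.Gamma_mul_Gamma_eq_betaIntegral (by simp; linarith) (by simp [hα0])
  have hsum : (((1-α:ℝ):ℂ) + ((α:ℝ):ℂ)) = 1 := by push_cast; ring
  rw [hsum, Complex.Gamma_one, one_mul] at key
  have hbeta : Complex.betaIntegral ((1-α:ℝ):ℂ) ((α:ℝ):ℂ)
      = ((∫ s in (0:ℝ)..1, s ^ (-α) * (1 - s) ^ (α - 1) : ℝ) : ℂ) := by
    rw [Complex.betaIntegral, ← intervalIntegral.integral_ofReal]
    refine intervalIntegral.integral_congr (fun x hx => ?_)
    rw [uIcc_of_le zero_le_one] at hx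
    rw [Complex.ofReal_mul, Complex.ofReal_cpow hx.1,
      Complex.ofReal_cpow (by linarith [hx.2] : (0:ℝ) ≤ 1 - x)]
    push_cast
    ring_nf
  rw [hbeta, Complex.Gamma_ofReal, Complex.Gamma_ofReal, ← Complex.ofReal_mul] at key
  have keyR : Real.Gamma (1-α) * Real.Gamma α = ∫ s in (0:ℝ)..1, s ^ (-α) * (1 - s) ^ (α - 1) :=
    mod_cast key
  rw [intervalIntegral.integral_of_le zero_le_one] at keyR
  rw [← MeasureTheory.integral_Ioc_eq_integral_Ioo, ← keyR, mul_comm]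
  exact Real.Gamma_mul_Gamma_one_sub α




lemma gval (θ v : ℝ) (hθ : 0 < θ) (hv : 0 < v) :
    ∫⁻ t in Ioo (0:ℝ) (v/θ), ENNReal.ofReal (((1+t)^2)⁻¹) = ENNReal.ofReal (v/(θ+v)) := by
  set c := v/θ with hc
  have hc0 : 0 < c := div_pos hv hθ
  have hcont : ContinuousOn (fun t : ℝ => ((1+t)^2)⁻¹) (uIcc 0 c) := by
    apply ContinuousOn.inv₀ (by fun_prop)
    intro t ht
    rw [uIcc_of_le hc0.le] at ht
    have : (0:ℝ) < 1 + t := by linarith [ht.1]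
    positivity
  have hints : IntervalIntegrable (fun t : ℝ => ((1+t)^2)⁻¹) volume 0 c :=
    hcont.intervalIntegrable
  have hFTC : ∫ t in (0:ℝ)..c, ((1+t)^2)⁻¹ = 1 - (1+c)⁻¹ := by
    rw [intervalIntegral.integral_eq_sub_of_hasDerivAt (f := fun x => -(1+x)⁻¹)
      (fun t ht => by
        rw [uIcc_of_le hc0.le] at ht
        have h1t : (1:ℝ) + t ≠ 0 := by have := ht.1; positivity
        have := (((hasDerivAt_id t).const_add (1:ℝ)).inv h1t).neg
        convert this using 1
        field_simp
        · funext x; simp [one_div]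
        · simp only [id_eq]; ring) hints]
    norm_num
    ring
  have hIntOn : IntegrableOn (fun t : ℝ => ((1+t)^2)⁻¹) (Ioo 0 c) := by
    have := (intervalIntegrable_iff_integrableOn_Ioc_of_le hc0.le).mp hints
    exact this.mono_set Ioo_subset_Ioc_self
  rw [← ofReal_integral_eq_lintegral_ofReal hIntOn
    (Filter.Eventually.of_forall fun t => by positivity)]
  congr 1
  rw [← MeasureTheory.integral_Ioc_eq_integral_Ioo, ← intervalIntegral.integral_of_le hc0.le,
    hFTC, hc]
  have hθv : θ + v ≠ 0 := by positivity
  field_simp; ring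

lemma fubini_key (α θ : ℝ) (hθ : 0 < θ) :
    (∫⁻ t in Ioi (0:ℝ), ENNReal.ofReal (((1+t)^2)⁻¹)
        * ∫⁻ v in Ioi (θ*t), ENNReal.ofReal (v ^ (-α) * (1+v)⁻¹))
    = ∫⁻ v in Ioi (0:ℝ), ENNReal.ofReal (v/(θ+v)) * ENNReal.ofReal (v ^ (-α) * (1+v)⁻¹) := by
  set H : ℝ → ℝ≥0∞ := fun v => ENNReal.ofReal (v ^ (-α) * (1+v)⁻¹) with hH
  have hHmeas : Measurable H := (h_meas α).ennreal_ofReal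
  set F : ℝ → ℝ → ℝ≥0∞ := fun t v =>
    if 0 < t ∧ θ*t < v then ENNReal.ofReal (((1+t)^2)⁻¹) * H v else 0 with hF
  have hFmeas : Measurable (Function.uncurry F) := by
    apply Measurable.ite
    · exact (measurableSet_lt measurable_const measurable_fst).inter
        (measurableSet_lt (measurable_fst.const_mul θ) measurable_snd)
    · exact ((measurable_fst.const_add 1).pow_const 2).inv.ennreal_ofReal.mul
        (hHmeas.comp measurable_snd)
    · exact measurable_const
  have claimA : ∀ t : ℝ, (∫⁻ v, F t v)
      = (Ioi (0:ℝ)).indicator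
          (fun t => ENNReal.ofReal (((1+t)^2)⁻¹) * ∫⁻ v in Ioi (θ*t), H v) t := by
    intro t
    by_cases ht : 0 < t
    · rw [Set.indicator_of_mem (show t ∈ Ioi (0:ℝ) from ht)]
      have hpt : ∀ v, F t v
          = (Ioi (θ*t)).indicator (fun v => ENNReal.ofReal (((1+t)^2)⁻¹) * H v) v := by
        intro v
        by_cases hv : θ*t < v
        · simp only [hF]; rw [if_pos ⟨ht, hv⟩, Set.indicator_of_mem (show v ∈ Ioi (θ*t) from hv)]
        · simp only [hF]; rw [if_neg (by tauto), Set.indicator_of_notMem (show v ∉ Ioi (θ*t) from hv)]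
      simp_rw [hpt]
      rw [lintegral_indicator measurableSet_Ioi, lintegral_const_mul _ hHmeas]
    · rw [Set.indicator_of_notMem (show t ∉ Ioi (0:ℝ) from ht)]
      have : ∀ v, F t v = 0 := fun v => by simp only [hF]; exact if_neg (by tauto)
      simp_rw [this, lintegral_zero]
  have claimB : ∀ v : ℝ, (∫⁻ t, F t v)
      = (Ioi (0:ℝ)).indicator (fun v => ENNReal.ofReal (v/(θ+v)) * H v) v := by
    intro v
    by_cases hv : 0 < v
    · rw [Set.indicator_of_mem (show v ∈ Ioi (0:ℝ) from hv)]
      have hpt : ∀ t, F t v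
          = (Ioo (0:ℝ) (v/θ)).indicator (fun t => ENNReal.ofReal (((1+t)^2)⁻¹) * H v) t := by
        intro t
        by_cases h : 0 < t ∧ θ*t < v
        · simp only [hF]; rw [if_pos h, Set.indicator_of_mem (show t ∈ Ioo (0:ℝ) (v/θ) from ⟨h.1, (lt_div_iff₀' hθ).mpr h.2⟩)]
        · simp only [hF]; rw [if_neg h, indicator_of_notMem]
          intro hmem
          exact h ⟨hmem.1, (lt_div_iff₀' hθ).mp hmem.2⟩
      simp_rw [hpt]
      rw [lintegral_indicator measurableSet_Ioo,
        lintegral_mul_const _ (by fun_prop : Measurable fun t : ℝ => ENNReal.ofReal (((1+t)^2)⁻¹)),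
        gval θ v hθ hv]
    · rw [Set.indicator_of_notMem (show v ∉ Ioi (0:ℝ) from hv)]
      have : ∀ t, F t v = 0 := by
        intro t
        simp only [hF]
        apply if_neg
        rintro ⟨ht, hvt⟩
        have : (0:ℝ) < θ*t := by positivity
        simp only [mem_Ioi, not_lt] at hv
        linarith
      simp_rw [this, lintegral_zero]
  calc (∫⁻ t in Ioi (0:ℝ), ENNReal.ofReal (((1+t)^2)⁻¹) * ∫⁻ v in Ioi (θ*t), H v)
      = ∫⁻ t, (Ioi (0:ℝ)).indicator
          (fun t => ENNReal.ofReal (((1+t)^2)⁻¹) * ∫⁻ v in Ioi (θ*t), H v) t := by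
        rw [lintegral_indicator measurableSet_Ioi]
    _ = ∫⁻ t, ∫⁻ v, F t v := by simp_rw [claimA]
    _ = ∫⁻ v, ∫⁻ t, F t v := lintegral_lintegral_swap hFmeas.aemeasurable
    _ = ∫⁻ v, (Ioi (0:ℝ)).indicator (fun v => ENNReal.ofReal (v/(θ+v)) * H v) v := by
        simp_rw [claimB]
    _ = ∫⁻ v in Ioi (0:ℝ), ENNReal.ofReal (v/(θ+v)) * H v := by
        rw [lintegral_indicator measurableSet_Ioi]




lemma fubini_real (α θ : ℝ) (hα : α ∈ Ioo (0:ℝ) 1) (hθ : 0 < θ) :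
    (∫ t in Ioi (0:ℝ), ((1+t)^2)⁻¹ * (∫ v in Ioi (θ*t), v ^ (-α) * (1+v)⁻¹))
    = ∫ v in Ioi (0:ℝ), (v/(θ+v)) * (v ^ (-α) * (1+v)⁻¹) := by
  have hHint := h_integrable α hα
  set h : ℝ → ℝ := fun v => v ^ (-α) * (1+v)⁻¹ with hh
  have hnn : ∀ v : ℝ, 0 < v → 0 ≤ h v := fun v hv => by
    have : (0:ℝ) < 1 + v := by linarith
    simp only [hh]
    positivity
  set P : ℝ → ℝ := fun u => ∫ x in Ioc (0:ℝ) u, h x with hP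
  have hPmono : Monotone P := by
    intro a b hab
    apply setIntegral_mono_set (hHint.mono_set Ioc_subset_Ioi_self)
    · filter_upwards [ae_restrict_mem measurableSet_Ioc] with v hv
      exact hnn v hv.1
    · exact (Ioc_subset_Ioc_right hab).eventuallyLE
  set C : ℝ := ∫ v in Ioi (0:ℝ), h v with hC
  have hsplit : ∀ u : ℝ, 0 ≤ u → (∫ v in Ioi u, h v) = C - P u := by
    intro u hu
    have hun : Ioc 0 u ∪ Ioi u = Ioi 0 := Ioc_union_Ioi_eq_Ioi hu
    have heq := setIntegral_union (Ioc_disjoint_Ioi le_rfl) measurableSet_Ioi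
      (hHint.mono_set Ioc_subset_Ioi_self) (hHint.mono_set (Ioi_subset_Ioi hu)) (f := h)
    rw [hun] at heq
    rw [hC, heq, hP]; ring
  have hmeasP : Measurable P := hPmono.measurable
  have hGmeas : AEStronglyMeasurable (fun t : ℝ => ((1+t)^2)⁻¹ * ∫ v in Ioi (θ*t), h v)
      (volume.restrict (Ioi 0)) := by
    apply AEStronglyMeasurable.congr
      (f := fun t : ℝ => ((1+t)^2)⁻¹ * (C - P (θ*t)))
    · exact (Measurable.mul (by fun_prop)
        (measurable_const.sub (hmeasP.comp (measurable_id.const_mul θ)))).aestronglyMeasurable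
    · filter_upwards [ae_restrict_mem measurableSet_Ioi] with t ht
      rw [hsplit (θ*t) (by simp only [mem_Ioi] at ht; positivity)]
  have hGnn : ∀ t : ℝ, 0 < t → 0 ≤ ∫ v in Ioi (θ*t), h v := by
    intro t ht
    apply setIntegral_nonneg measurableSet_Ioi
    intro v hv
    exact hnn v (lt_trans (by positivity) hv)
  rw [MeasureTheory.integral_eq_lintegral_of_nonneg_ae
    (by filter_upwards [ae_restrict_mem measurableSet_Ioi] with t ht
        exact mul_nonneg (by positivity) (hGnn t ht)) hGmeas]
  rw [MeasureTheory.integral_eq_lintegral_of_nonneg_ae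
    (by filter_upwards [ae_restrict_mem measurableSet_Ioi] with v hv
        simp only [mem_Ioi] at hv
        exact mul_nonneg (by positivity) (hnn v hv))
    ((by fun_prop :
      Measurable fun v : ℝ => v / (θ + v) * (v ^ (-α) * (1+v)⁻¹)).aestronglyMeasurable.restrict)]
  congr 1
  have e1 : (∫⁻ t in Ioi (0:ℝ), ENNReal.ofReal (((1+t)^2)⁻¹ * ∫ v in Ioi (θ*t), h v))
      = ∫⁻ t in Ioi (0:ℝ), ENNReal.ofReal (((1+t)^2)⁻¹)
          * ∫⁻ v in Ioi (θ*t), ENNReal.ofReal (h v) := by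
    apply setLIntegral_congr_fun measurableSet_Ioi
    simp only [EqOn]
    intro t ht
    rw [ENNReal.ofReal_mul (by positivity)]
    congr 1
    rw [← ofReal_integral_eq_lintegral_ofReal
      (hHint.mono_set (Ioi_subset_Ioi (by simp only [mem_Ioi] at ht; positivity)))
      (by filter_upwards [ae_restrict_mem measurableSet_Ioi] with v hv
          exact hnn v (lt_trans (by simp only [mem_Ioi] at ht; positivity) hv))]
  have e2 : (∫⁻ v in Ioi (0:ℝ), ENNReal.ofReal ((v/(θ+v)) * h v))
      = ∫⁻ v in Ioi (0:ℝ), ENNReal.ofReal (v/(θ+v)) * ENNReal.ofReal (h v) := by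
    apply setLIntegral_congr_fun measurableSet_Ioi
    simp only [EqOn]
    intro v hv
    rw [ENNReal.ofReal_mul (by simp only [mem_Ioi] at hv; positivity)]
  rw [e1, e2]
  exact fubini_key α θ hθ


lemma pointwise_den (α : ℝ) (w : ℝ) (hw : 0 < w) :
    (w / (1 + w)) * w ^ (-1 - α) = w ^ (-α) * (1+w)⁻¹ := by
  have h1w : (0:ℝ) < 1 + w := by linarith
  have key : w * w ^ (-1 - α) = w ^ (-α) := by
    nth_rewrite 1 [← Real.rpow_one w]
    rw [← Real.rpow_add hw]
    congr 1
    ring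
  rw [div_mul_eq_mul_div, key, div_eq_mul_inv]

/-- for every `α ∈ (0,1)` and `θ > 0`,
`∫₀^∞ (1+t)⁻² Λ⁰(θt) dt = c(θ)`. -/
theorem stmt_14 (α θ : ℝ) (hα : α ∈ Set.Ioo (0:ℝ) 1) (hθ : 0 < θ) :
    (∫ t in Set.Ioi (0:ℝ), ((1 + t) ^ 2)⁻¹ * arcsineCDF α (θ * t)) = cFun α θ := by
  obtain ⟨hα0, hα1⟩ := hα
  have hπ := Real.pi_pos
  have hsin : 0 < Real.sin (π * α) :=
    Real.sin_pos_of_pos_of_lt_pi (by positivity) (by nlinarith)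
  have hLHS : (∫ t in Set.Ioi (0:ℝ), ((1 + t) ^ 2)⁻¹ * arcsineCDF α (θ * t))
      = (Real.sin (π*α)/π)
        * ∫ t in Ioi (0:ℝ), ((1+t)^2)⁻¹ * ∫ v in Ioi (θ*t), v ^ (-α) * (1+v)⁻¹ := by
    rw [← integral_const_mul]
    apply setIntegral_congr_fun measurableSet_Ioi
    intro t ht
    simp only [mem_Ioi] at ht
    dsimp only
    rw [show arcsineCDF α (θ*t) = (Real.sin (π*α)/π) * ∫ s in Ioo (θ*t/(1+θ*t)) 1, s ^ (-α) * (1-s)^(α-1) from rfl, subst_lemma α (θ*t) (by positivity)]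
    ring
  rw [hLHS, fubini_real α θ ⟨hα0, hα1⟩ hθ]
  unfold cFun
  have hden : (∫ w in Set.Ioi (0:ℝ), (w / (1 + w)) * w ^ (-1 - α)) = π / Real.sin (π * α) := by
    rw [show (∫ w in Set.Ioi (0:ℝ), (w / (1 + w)) * w ^ (-1 - α))
        = ∫ w in Ioi (0:ℝ), w ^ (-α) * (1+w)⁻¹ from
      setIntegral_congr_fun measurableSet_Ioi (fun w hw => pointwise_den α w hw)]
    have hs := subst_lemma α 0 le_rfl
    norm_num at hs
    rw [← hs]
    exact beta_val α ⟨hα0, hα1⟩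
  have hnum : (∫ w in Set.Ioi (0:ℝ), (w / (1 + w)) * (w / (θ + w)) * w ^ (-1 - α))
      = ∫ v in Ioi (0:ℝ), (v/(θ+v)) * (v ^ (-α) * (1+v)⁻¹) := by
    apply setIntegral_congr_fun measurableSet_Ioi
    intro w hw
    simp only [mem_Ioi] at hw
    have := pointwise_den α w hw
    calc (w / (1 + w)) * (w / (θ + w)) * w ^ (-1 - α)
        = (w / (θ + w)) * ((w / (1 + w)) * w ^ (-1 - α)) := by ring
      _ = (w / (θ + w)) * (w ^ (-α) * (1+w)⁻¹) := by rw [this]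
  rw [hnum, hden, div_div_eq_mul_div]
  ring
end

section
/- Let φ, ψ : [0,∞) → ℝ be bounded, nondecreasing and right-continuous. If ∫₀^∞ (1+t)^{−2} φ(θt) dt = ∫₀^∞ (1+t)^{−2} ψ(θt) dt for every θ > 0, then φ(t) = ψ(t) for every t ≥ 0. In other words, the transform φ ↦ (θ ↦ ∫₀^∞ (1+t)^{−2} φ(θt) dt) uniquely determines a probability distribution function φ. -/
open MeasureTheory Set Filter Topology

private lemma kint {c : ℝ} (hc : 0 < c) {n : ℕ} (hn : 2 ≤ n) :
    IntegrableOn (fun s : ℝ => ((c + s) ^ n)⁻¹) (Ioi 0) := by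
  have h2 : (2:ℝ) ≤ (n:ℝ) := by exact_mod_cast hn
  have h1 : IntegrableOn (fun t : ℝ => t ^ (-(n:ℝ))) (Ioi c) :=
    integrableOn_Ioi_rpow_of_lt (by linarith) hc
  have h1' : Integrable ((Ioi c).indicator fun t : ℝ => t ^ (-(n:ℝ))) :=
    (integrable_indicator_iff measurableSet_Ioi).2 h1
  refine (integrable_indicator_iff measurableSet_Ioi).1 ?_
  refine (h1'.comp_add_left c).congr (Filter.Eventually.of_forall fun x => ?_)
  by_cases hx : (0:ℝ) < x
  · have hmem : c + x ∈ Ioi c := by simp only [mem_Ioi]; linarith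
    simp only [Set.indicator_of_mem hmem, Set.indicator_of_mem (mem_Ioi.2 hx)]
    rw [← Real.rpow_natCast (c + x) n, ← Real.rpow_neg (by linarith)]
  · have h4 : c + x ∉ Ioi c := by simp only [mem_Ioi]; push_neg at hx ⊢; linarith
    have h5 : x ∉ Ioi (0:ℝ) := by simpa using hx
    simp only [Set.indicator_of_notMem h4, Set.indicator_of_notMem h5]

private lemma hint {h : ℝ → ℝ} (hm : Measurable h) {C : ℝ} (hC : ∀ t, |h t| ≤ C)
    {c : ℝ} (hc : 0 < c) {n : ℕ} (hn : 2 ≤ n) :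
    IntegrableOn (fun s => h s * ((c + s) ^ n)⁻¹) (Ioi (0:ℝ)) := by
  refine Integrable.mono' ((kint hc hn).const_mul C)
    ((hm.mul (((measurable_const.add measurable_id).pow_const n).inv)).aestronglyMeasurable) ?_
  rw [ae_restrict_iff' measurableSet_Ioi]
  refine Filter.Eventually.of_forall fun s hs => ?_
  have hs0 : (0:ℝ) < s := hs
  have h1 : (0:ℝ) < c + s := by linarith
  have h2 : (0:ℝ) ≤ ((c + s) ^ n)⁻¹ := by positivity
  rw [Real.norm_eq_abs, abs_mul, abs_of_nonneg h2]
  exact mul_le_mul_of_nonneg_right (hC s) h2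

/-- the transform `φ ↦ (θ ↦ ∫₀^∞ (1+t)⁻² φ(θt) dt)` determines a bounded,
nondecreasing, right-continuous function on `[0,∞)` uniquely. -/
theorem stmt_15 (φ ψ : ℝ → ℝ)
    (hφbdd : ∃ M : ℝ, ∀ t : ℝ, 0 ≤ t → |φ t| ≤ M)
    (hψbdd : ∃ M : ℝ, ∀ t : ℝ, 0 ≤ t → |ψ t| ≤ M)
    (hφmono : MonotoneOn φ (Set.Ici (0:ℝ)))
    (hψmono : MonotoneOn ψ (Set.Ici (0:ℝ)))
    (hφrc : ∀ t : ℝ, 0 ≤ t → ContinuousWithinAt φ (Set.Ici t) t)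
    (hψrc : ∀ t : ℝ, 0 ≤ t → ContinuousWithinAt ψ (Set.Ici t) t)
    (heq : ∀ θ : ℝ, 0 < θ →
      (∫ t in Set.Ioi (0:ℝ), ((1 + t) ^ 2)⁻¹ * φ (θ * t))
        = ∫ t in Set.Ioi (0:ℝ), ((1 + t) ^ 2)⁻¹ * ψ (θ * t)) :
    ∀ t : ℝ, 0 ≤ t → φ t = ψ t := by
  obtain ⟨M, hM⟩ := hφbdd
  obtain ⟨N, hN⟩ := hψbdd
  set φ' : ℝ → ℝ := fun t => φ (max t 0) with hφ'def
  set ψ' : ℝ → ℝ := fun t => ψ (max t 0) with hψ'def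
  have hφ'mono : Monotone φ' := fun a b hab =>
    hφmono (le_max_right a 0) (le_max_right b 0) (max_le_max hab le_rfl)
  have hψ'mono : Monotone ψ' := fun a b hab =>
    hψmono (le_max_right a 0) (le_max_right b 0) (max_le_max hab le_rfl)
  have hφ'meas : Measurable φ' := hφ'mono.measurable
  have hψ'meas : Measurable ψ' := hψ'mono.measurable
  have hφ'C : ∀ t, |φ' t| ≤ M := fun t => hM _ (le_max_right t 0)
  have hψ'C : ∀ t, |ψ' t| ≤ N := fun t => hN _ (le_max_right t 0)
  set h : ℝ → ℝ := fun t => φ' t - ψ' t with hhdef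
  have hhm : Measurable h := hφ'meas.sub hψ'meas
  have hhC : ∀ t, |h t| ≤ M + N := fun t =>
    (abs_sub _ _).trans (add_le_add (hφ'C t) (hψ'C t))
  -- Step A : the basic transform identity
  have E2 : ∀ θ : ℝ, 0 < θ → (∫ s in Ioi (0:ℝ), h s * ((θ + s) ^ 2)⁻¹) = 0 := by
    intro θ hθ
    have key : ∀ (f f' : ℝ → ℝ), (∀ t, f' t = f (max t 0)) →
        (∫ t in Ioi (0:ℝ), ((1 + t) ^ 2)⁻¹ * f (θ * t))
          = θ⁻¹ • (θ ^ 2 * ∫ s in Ioi (0:ℝ), f' s * ((θ + s) ^ 2)⁻¹) := by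
      intro f f' hff'
      have step1 : (∫ t in Ioi (0:ℝ), ((1 + t) ^ 2)⁻¹ * f (θ * t))
          = ∫ t in Ioi (0:ℝ), θ ^ 2 * (f' (θ * t) * ((θ + θ * t) ^ 2)⁻¹) := by
        refine setIntegral_congr_fun measurableSet_Ioi fun t ht => ?_
        have ht0 : (0:ℝ) < t := ht
        have h1t : (0:ℝ) < 1 + t := by linarith
        have hθt : (0:ℝ) < θ * t := mul_pos hθ ht0
        have hk : θ ^ 2 * ((θ + θ * t) ^ 2)⁻¹ = ((1 + t) ^ 2)⁻¹ := by
          rw [show θ + θ * t = θ * (1 + t) by ring, mul_pow, mul_inv, ← mul_assoc,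
            mul_inv_cancel₀ (by positivity : (θ:ℝ)^2 ≠ 0), one_mul]
        rw [hff' (θ * t), max_eq_left hθt.le, ← hk]
        ring
      rw [step1, integral_comp_mul_left_Ioi
        (fun s => θ ^ 2 * (f' s * ((θ + s) ^ 2)⁻¹)) 0 hθ, mul_zero, integral_const_mul]
    have hMθ := key φ φ' (fun t => rfl)
    have hNθ := key ψ ψ' (fun t => rfl)
    have heqθ := heq θ hθ
    rw [hMθ, hNθ, smul_eq_mul, smul_eq_mul] at heqθ
    have hA : (∫ s in Ioi (0:ℝ), φ' s * ((θ + s) ^ 2)⁻¹)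
        = ∫ s in Ioi (0:ℝ), ψ' s * ((θ + s) ^ 2)⁻¹ := by
      have hne : θ⁻¹ * θ ^ 2 ≠ 0 := by positivity
      field_simp at heqθ
      exact heqθ
    have hsub : (∫ s in Ioi (0:ℝ), h s * ((θ + s) ^ 2)⁻¹)
        = (∫ s in Ioi (0:ℝ), φ' s * ((θ + s) ^ 2)⁻¹)
          - ∫ s in Ioi (0:ℝ), ψ' s * ((θ + s) ^ 2)⁻¹ := by
      rw [← integral_sub (hint hφ'meas hφ'C hθ le_rfl) (hint hψ'meas hψ'C hθ le_rfl)]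
      refine setIntegral_congr_fun measurableSet_Ioi fun s hs => ?_
      simp only [hhdef]
      ring
    rw [hsub, hA, sub_self]
  -- Step B : all higher moments vanish
  have En : ∀ k : ℕ, ∀ θ : ℝ, 0 < θ →
      (∫ s in Ioi (0:ℝ), h s * ((θ + s) ^ (k + 2))⁻¹) = 0 := by
    intro k
    induction k with
    | zero => intro θ hθ; exact E2 θ hθ
    | succ k ih =>
      intro θ hθ
      have hb2 : (2:ℕ) ≤ k + 2 := by omega
      have hb3 : (2:ℕ) ≤ k + 1 + 2 := by omega
      have hθ2 : (0:ℝ) < θ / 2 := by linarith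
      have hd := (hasDerivAt_integral_of_dominated_loc_of_deriv_le (s := Metric.ball θ (θ/2))
        (μ := volume.restrict (Ioi (0:ℝ)))
        (F := fun x s => h s * ((x + s) ^ (k + 2))⁻¹)
        (F' := fun x s => h s * (-((k:ℝ)+2) * ((x + s) ^ (k + 1 + 2))⁻¹))
        (bound := fun s => ((M + N) * ((k:ℝ)+2)) * ((θ/2 + s) ^ (k + 1 + 2))⁻¹)
        (x₀ := θ) (Metric.ball_mem_nhds θ hθ2)
        (Filter.Eventually.of_forall fun x =>
          (hhm.mul (((measurable_const.add measurable_id).pow_const _).inv)).aestronglyMeasurable)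
        (hint hhm hhC hθ hb2)
        ((hhm.mul ((measurable_const.mul
          (((measurable_const.add measurable_id).pow_const _).inv)))).aestronglyMeasurable)
        ?_ ?_ ?_).2
      · have hz : HasDerivAt (fun x : ℝ => ∫ s in Ioi (0:ℝ), h s * ((x + s) ^ (k+2))⁻¹) 0 θ := by
          refine HasDerivAt.congr_of_eventuallyEq (hasDerivAt_const θ 0) ?_
          filter_upwards [eventually_gt_nhds hθ] with x hx
          exact ih x hx
        have huniq := hz.unique hd
        have hrw : (∫ s in Ioi (0:ℝ), h s * (-((k:ℝ)+2) * ((θ + s) ^ (k + 1 + 2))⁻¹))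
            = (-((k:ℝ)+2)) * ∫ s in Ioi (0:ℝ), h s * ((θ + s) ^ (k + 1 + 2))⁻¹ := by
          rw [← integral_const_mul]
          refine setIntegral_congr_fun measurableSet_Ioi fun s hs => ?_
          ring
        rw [hrw] at huniq
        have hne : (-((k:ℝ)+2)) ≠ 0 := by
          have : (0:ℝ) ≤ (k:ℝ) := Nat.cast_nonneg k
          intro hcon; nlinarith
        exact (mul_eq_zero.1 huniq.symm).resolve_left hne
      · -- bound
        rw [ae_restrict_iff' measurableSet_Ioi]
        refine Filter.Eventually.of_forall fun s hs => ?_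
        intro x hx
        have hs0 : (0:ℝ) < s := hs
        rw [Metric.mem_ball, Real.dist_eq, abs_sub_lt_iff] at hx
        have hx2 : θ/2 < x := by linarith [hx.2]
        have h1 : (0:ℝ) < θ/2 + s := by linarith
        have h2 : θ/2 + s ≤ x + s := by linarith
        have h3 : (θ/2 + s) ^ (k+1+2) ≤ (x + s) ^ (k+1+2) := pow_le_pow_left₀ h1.le h2 _
        have h4 : ((x + s) ^ (k+1+2))⁻¹ ≤ ((θ/2 + s) ^ (k+1+2))⁻¹ := by
          exact inv_anti₀ (pow_pos h1 _) h3
        have h5 : (0:ℝ) ≤ ((x + s) ^ (k+1+2))⁻¹ := inv_nonneg.2 (pow_nonneg (by linarith : (0:ℝ) ≤ x + s) _)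
        have h6 : (0:ℝ) ≤ (k:ℝ) + 2 := by positivity
        rw [Real.norm_eq_abs, abs_mul, abs_mul, abs_neg, abs_of_nonneg h6, abs_of_nonneg h5]
        have h7 : |h s| * (((k:ℝ)+2) * ((x + s) ^ (k+1+2))⁻¹)
            ≤ (M + N) * (((k:ℝ)+2) * ((θ/2 + s) ^ (k+1+2))⁻¹) := by
          apply mul_le_mul (hhC s) (by exact mul_le_mul_of_nonneg_left h4 h6)
            (by positivity) (le_trans (abs_nonneg _) (hhC s))
        calc |h s| * (((k:ℝ)+2) * ((x + s) ^ (k+1+2))⁻¹)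
            ≤ (M + N) * (((k:ℝ)+2) * ((θ/2 + s) ^ (k+1+2))⁻¹) := h7
          _ = ((M + N) * ((k:ℝ)+2)) * ((θ/2 + s) ^ (k+1+2))⁻¹ := by ring
      · exact (kint hθ2 hb3).const_mul _
      · -- differentiability
        rw [ae_restrict_iff' measurableSet_Ioi]
        refine Filter.Eventually.of_forall fun s hs => ?_
        intro x hx
        have hs0 : (0:ℝ) < s := hs
        rw [Metric.mem_ball, Real.dist_eq, abs_sub_lt_iff] at hx
        have hx2 : θ/2 < x := by linarith [hx.2]
        have hpos : (0:ℝ) < x + s := by linarith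
        have hne : (x + s) ≠ 0 := ne_of_gt hpos
        have hx1 : HasDerivAt (fun x : ℝ => x + s) 1 x := (hasDerivAt_id x).add_const s
        have hx2' : HasDerivAt (fun x : ℝ => (x + s) ^ (k+2))
            ((((k:ℝ)+2)) * (x + s) ^ (k+1) * 1) x := by
          have := hx1.pow (k+2)
          simpa [Pi.pow_def] using this
        have hx3 : HasDerivAt (fun y => h s * ((y + s) ^ (k+2))⁻¹) _ x := (hx2'.inv (pow_ne_zero _ hne)).const_mul (h s)
        refine hx3.congr_deriv ?_
        rw [div_eq_mul_inv]
        have hpane : ((x + s) ^ (k + 2)) ^ 2 ≠ 0 := by positivity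
        field_simp
        ring
  -- Step C : integral against any continuous test function (via Weierstrass)
  have hMN : (0:ℝ) ≤ M + N := le_trans (abs_nonneg _) (hhC 0)
  have hK : IntegrableOn (fun s : ℝ => (((1:ℝ) + s) ^ 2)⁻¹) (Ioi 0) := kint one_pos le_rfl
  set K : ℝ := ∫ s in Ioi (0:ℝ), (((1:ℝ) + s) ^ 2)⁻¹ with hKdef
  have hKnn : 0 ≤ K := by
    refine setIntegral_nonneg measurableSet_Ioi fun s hs => ?_
    have : (0:ℝ) < s := hs
    positivity
  have hInt : ∀ (f : ℝ → ℝ) (B : ℝ), ContinuousOn f (Icc 0 1) → (∀ u ∈ Icc (0:ℝ) 1, |f u| ≤ B) →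
      IntegrableOn (fun s => h s * f ((1+s)⁻¹) * ((1+s)^2)⁻¹) (Ioi (0:ℝ)) := by
    intro f B hf hB
    have hvmem : ∀ s ∈ Ioi (0:ℝ), (1+s)⁻¹ ∈ Icc (0:ℝ) 1 := by
      intro s hs
      have hs0 : (0:ℝ) < s := hs
      constructor
      · positivity
      · rw [inv_le_one₀ (by linarith)]; linarith
    have hv : ContinuousOn (fun s : ℝ => (1+s)⁻¹) (Ioi 0) := by
      refine ContinuousOn.inv₀ (Continuous.continuousOn (by continuity)) fun s hs => ?_
      have : (0:ℝ) < s := hs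
      positivity
    have hcomp : ContinuousOn (fun s : ℝ => f ((1+s)⁻¹)) (Ioi 0) :=
      hf.comp hv hvmem
    have hmeas1 : AEStronglyMeasurable (fun s => h s * f ((1+s)⁻¹) * ((1+s)^2)⁻¹)
        (volume.restrict (Ioi 0)) := by
      refine AEStronglyMeasurable.mul (AEStronglyMeasurable.mul hhm.aestronglyMeasurable
        (hcomp.aestronglyMeasurable measurableSet_Ioi)) ?_
      exact (((measurable_const.add measurable_id).pow_const 2).inv).aestronglyMeasurable
    refine Integrable.mono' (hK.const_mul ((M+N) * B)) hmeas1 ?_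
    rw [ae_restrict_iff' measurableSet_Ioi]
    refine Filter.Eventually.of_forall fun s hs => ?_
    have hs0 : (0:ℝ) < s := hs
    have hker : (0:ℝ) ≤ (((1:ℝ)+s)^2)⁻¹ := by positivity
    have hBnn : 0 ≤ B := le_trans (abs_nonneg _) (hB _ (hvmem s hs))
    rw [Real.norm_eq_abs, abs_mul, abs_mul, abs_of_nonneg hker]
    have : |h s| * |f ((1+s)⁻¹)| ≤ (M+N) * B :=
      mul_le_mul (hhC s) (hB _ (hvmem s hs)) (abs_nonneg _) hMN
    calc |h s| * |f ((1+s)⁻¹)| * (((1:ℝ)+s)^2)⁻¹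
        ≤ (M+N) * B * (((1:ℝ)+s)^2)⁻¹ := mul_le_mul_of_nonneg_right this hker
      _ = (M+N) * B * (((1:ℝ)+s)^2)⁻¹ := rfl
  have Pol : ∀ p : Polynomial ℝ,
      (∫ s in Ioi (0:ℝ), h s * p.eval ((1+s)⁻¹) * ((1+s)^2)⁻¹) = 0 := by
    intro p
    have hrw : ∀ s ∈ Ioi (0:ℝ), h s * p.eval ((1+s)⁻¹) * ((1+s)^2)⁻¹
        = ∑ i ∈ Finset.range (p.natDegree + 1), p.coeff i * (h s * (((1:ℝ)+s) ^ (i+2))⁻¹) := by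
      intro s hs
      rw [Polynomial.eval_eq_sum_range, Finset.mul_sum, Finset.sum_mul]
      refine Finset.sum_congr rfl fun i _ => ?_
      have key : (((1:ℝ)+s) ^ (i+2))⁻¹ = ((1+s)⁻¹)^i * (((1:ℝ)+s)^2)⁻¹ := by
        rw [pow_add, mul_inv, inv_pow]
      rw [key]; ring
    rw [setIntegral_congr_fun measurableSet_Ioi hrw,
      integral_finset_sum _ (fun i _ => (hint hhm hhC one_pos (by omega)).const_mul _)]
    refine Finset.sum_eq_zero fun i _ => ?_
    rw [integral_const_mul, En i 1 one_pos, mul_zero]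
  have Cont : ∀ f : ℝ → ℝ, ContinuousOn f (Icc 0 1) →
      (∫ s in Ioi (0:ℝ), h s * f ((1+s)⁻¹) * ((1+s)^2)⁻¹) = 0 := by
    intro f hf
    obtain ⟨B₀, hB₀⟩ := isCompact_Icc.exists_bound_of_continuousOn hf
    have hBf : ∀ u ∈ Icc (0:ℝ) 1, |f u| ≤ max B₀ 0 := fun u hu =>
      le_trans (by simpa using hB₀ u hu) (le_max_left _ _)
    set T : ℝ := ∫ s in Ioi (0:ℝ), h s * f ((1+s)⁻¹) * ((1+s)^2)⁻¹ with hTdef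
    have hT : ∀ ε : ℝ, 0 < ε → |T| ≤ ε * ((M+N+1) * (K+1)) := by
      intro ε hε
      obtain ⟨p, hp⟩ := exists_polynomial_near_of_continuousOn 0 1 f hf ε hε
      have hpB : ∀ u ∈ Icc (0:ℝ) 1, |Polynomial.eval u p| ≤ max B₀ 0 + ε := by
        intro u hu
        have h1 := hp u hu
        have h2 := hBf u hu
        calc |Polynomial.eval u p| = |f u + (Polynomial.eval u p - f u)| := by ring_nf
          _ ≤ |f u| + |Polynomial.eval u p - f u| := abs_add_le _ _
          _ ≤ max B₀ 0 + ε := add_le_add h2 h1.le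
      have hIf := hInt f (max B₀ 0) hf hBf
      have hIp := hInt (fun u => Polynomial.eval u p) (max B₀ 0 + ε)
        (Polynomial.continuous p).continuousOn hpB
      have hsplit : T = ∫ s in Ioi (0:ℝ),
          (h s * f ((1+s)⁻¹) * ((1+s)^2)⁻¹
            - h s * Polynomial.eval ((1+s)⁻¹) p * ((1+s)^2)⁻¹) := by
        rw [integral_sub hIf hIp, ← hTdef, Pol p, sub_zero]
      have hbd : |T| ≤ ∫ s in Ioi (0:ℝ), ((M+N) * ε) * (((1:ℝ)+s)^2)⁻¹ := by
        rw [hsplit, ← Real.norm_eq_abs]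
        refine norm_integral_le_of_norm_le (hK.const_mul _) ?_
        rw [ae_restrict_iff' measurableSet_Ioi]
        refine Filter.Eventually.of_forall fun s hs => ?_
        have hs0 : (0:ℝ) < s := hs
        have hker : (0:ℝ) ≤ (((1:ℝ)+s)^2)⁻¹ := by positivity
        have hvm : (1+s)⁻¹ ∈ Icc (0:ℝ) 1 := by
          constructor
          · positivity
          · rw [inv_le_one₀ (by linarith)]; linarith
        have hdiff : |f ((1+s)⁻¹) - Polynomial.eval ((1+s)⁻¹) p| ≤ ε := by
          rw [abs_sub_comm]; exact (hp _ hvm).le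
        have heq1 : h s * f ((1+s)⁻¹) * ((1+s)^2)⁻¹
            - h s * Polynomial.eval ((1+s)⁻¹) p * ((1+s)^2)⁻¹
            = h s * (f ((1+s)⁻¹) - Polynomial.eval ((1+s)⁻¹) p) * ((1+s)^2)⁻¹ := by ring
        rw [Real.norm_eq_abs, heq1, abs_mul, abs_mul, abs_of_nonneg hker]
        have : |h s| * |f ((1+s)⁻¹) - Polynomial.eval ((1+s)⁻¹) p| ≤ (M+N) * ε :=
          mul_le_mul (hhC s) hdiff (abs_nonneg _) hMN
        exact mul_le_mul_of_nonneg_right this hker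
      calc |T| ≤ ∫ s in Ioi (0:ℝ), ((M+N) * ε) * (((1:ℝ)+s)^2)⁻¹ := hbd
        _ = ((M+N) * ε) * K := by rw [integral_const_mul]
        _ ≤ ε * ((M+N+1) * (K+1)) := by nlinarith
    by_contra hTne
    have habs : 0 < |T| := abs_pos.2 hTne
    have hden : 0 < (M+N+1) * (K+1) := by nlinarith
    have := hT (|T| / (2 * ((M+N+1) * (K+1)))) (by positivity)
    rw [div_mul_eq_mul_div, mul_comm] at this
    have h2 : ((M+N+1) * (K+1)) * |T| / (2 * ((M+N+1) * (K+1))) = |T| / 2 := by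
      field_simp
    rw [h2] at this
    linarith
  -- Step C' : test against smooth compactly supported functions, conclude h = 0 a.e.
  have hae : ∀ᵐ x : ℝ, x ∈ Ioi (0:ℝ) → h x * ((1+x)^2)⁻¹ = 0 := by
    refine isOpen_Ioi.ae_eq_zero_of_integral_contDiff_smul_eq_zero
      ((hint hhm hhC one_pos le_rfl).locallyIntegrableOn) ?_
    intro g hg hgsupp hgsub
    have h0 : ∀ x : ℝ, x ∉ Ioi (0:ℝ) → g x • (h x * ((1+x)^2)⁻¹) = 0 := by
      intro x hx
      rw [image_eq_zero_of_notMem_tsupport (fun hc => hx (hgsub hc)), zero_smul]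
    rw [← setIntegral_eq_integral_of_forall_compl_eq_zero h0]
    obtain ⟨R, hR⟩ := hgsupp.isCompact.isBounded.subset_closedBall 0
    set fg : ℝ → ℝ := fun u => if u = 0 then 0 else g (u⁻¹ - 1) with hfgdef
    have hgz : ∀ y : ℝ, R < |y| → g y = 0 := by
      intro y hy
      by_contra hgy
      have : y ∈ tsupport g := subset_tsupport g (by simpa [Function.mem_support] using hgy)
      have := hR this
      rw [Metric.mem_closedBall, Real.dist_eq, sub_zero] at this
      linarith
    have hfgcont : ContinuousOn fg (Icc 0 1) := by
      intro u hu
      rcases eq_or_ne u 0 with rfl | hu0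
      · have hδ : (0:ℝ) < (1 + max R 0)⁻¹ := by positivity
        have hev : ∀ᶠ v in 𝓝[Icc (0:ℝ) 1] 0, fg v = 0 := by
          filter_upwards [mem_nhdsWithin_of_mem_nhds (Metric.ball_mem_nhds (0:ℝ) hδ),
            self_mem_nhdsWithin] with v hv1 hv2
          rcases eq_or_ne v 0 with rfl | hv0
          · simp [hfgdef]
          · have hv0' : 0 < v := lt_of_le_of_ne hv2.1 (Ne.symm hv0)
            rw [Metric.mem_ball, Real.dist_eq, sub_zero, abs_of_pos hv0'] at hv1
            have hvinv : 1 + max R 0 < v⁻¹ := by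
              rw [← inv_inv (1 + max R 0)]
              exact inv_strictAnti₀ hv0' hv1
            have : R < |v⁻¹ - 1| := by
              rw [abs_of_pos (by nlinarith [le_max_left R 0, le_max_right R 0] : 0 < v⁻¹ - 1)]
              nlinarith [le_max_left R 0, le_max_right R 0]
            simp [hfgdef, hv0, hgz _ this]
        refine (continuousWithinAt_const (b := (0:ℝ))).congr_of_eventuallyEq hev (by simp [hfgdef])
      · have hbase : ContinuousAt (fun v : ℝ => g (v⁻¹ - 1)) u :=
          hg.continuous.continuousAt.comp ((continuousAt_inv₀ hu0).sub continuousAt_const)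
        have hev : ∀ᶠ v in 𝓝 u, fg v = g (v⁻¹ - 1) := by
          filter_upwards [isOpen_ne.mem_nhds hu0] with v hv
          simp [hfgdef, hv]
        exact (hbase.congr (Filter.EventuallyEq.symm hev)).continuousWithinAt
    have hC := Cont fg hfgcont
    refine Eq.trans ?_ hC
    refine setIntegral_congr_fun measurableSet_Ioi fun s hs => ?_
    have hs0 : (0:ℝ) < s := hs
    have hne : ((1:ℝ)+s)⁻¹ ≠ 0 := ne_of_gt (by positivity)
    have harg : (((1:ℝ)+s)⁻¹)⁻¹ - 1 = s := by rw [inv_inv]; ring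
    simp only [hfgdef, if_neg hne, harg, smul_eq_mul]
    ring
  -- Step D : from a.e. to everywhere, by right continuity
  have hae' : volume {x : ℝ | ¬(x ∈ Ioi (0:ℝ) → h x = 0)} = 0 := by
    have hae2 : ∀ᵐ x : ℝ, x ∈ Ioi (0:ℝ) → h x = 0 := by
      filter_upwards [hae] with x hx hx0
      have hker : ((1+x)^2 : ℝ)⁻¹ ≠ 0 := by
        have : (0:ℝ) < x := hx0
        positivity
      exact (mul_eq_zero.1 (hx hx0)).resolve_right hker
    rw [ae_iff] at hae2
    exact hae2
  intro t ht
  have hfreq : ∃ᶠ s in 𝓝[>] t, h s = 0 := by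
    rw [(nhdsGT_basis t).frequently_iff]
    intro b hb
    by_contra hcon
    push_neg at hcon
    have hsub : Ioo t b ⊆ {x : ℝ | ¬(x ∈ Ioi (0:ℝ) → h x = 0)} := by
      intro x hx
      intro himp
      exact hcon x hx (himp (lt_of_le_of_lt ht hx.1))
    have := measure_mono_null hsub hae'
    rw [Real.volume_Ioo] at this
    have hbt : b - t ≤ 0 := by
      by_contra hbt
      push_neg at hbt
      rw [ENNReal.ofReal_eq_zero] at this
      linarith
    linarith
  have htend : Tendsto (fun s => φ s - ψ s) (𝓝[>] t) (𝓝 (φ t - ψ t)) :=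
    ((hφrc t ht).sub (hψrc t ht)).mono_left (nhdsWithin_mono t Ioi_subset_Ici_self)
  have hfreq' : ∃ᶠ s in 𝓝[>] t, (fun s => φ s - ψ s) s ∈ ({0} : Set ℝ) := by
    refine hfreq.mp ?_
    filter_upwards [eventually_mem_nhdsWithin] with s hs hzero
    have hs0 : (0:ℝ) ≤ s := le_trans ht (le_of_lt hs)
    have : φ s - ψ s = h s := by simp [hhdef, hφ'def, hψ'def, max_eq_left hs0]
    rw [mem_singleton_iff, this, hzero]
  have hcl : φ t - ψ t ∈ closure ({0} : Set ℝ) :=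
    mem_closure_of_frequently_of_tendsto hfreq' htend
  rw [isClosed_singleton.closure_eq, mem_singleton_iff, sub_eq_zero] at hcl
  exact hcl
end

section
/- Fix α ∈ (0,1) and set G(α) = ∫₀^∞ t^α e^{−t} dt. Define, for θ > 0, Λ̂(θ) = (1/G(α)) (∫₀^∞ e^{−θ/w} w^{−(1+α)} dw) / (∫₀^∞ (w/(1+w)) w^{−(1+α)} dw) and Λ̃(θ) = (1/G(α)) (∫₀^1 ∫₀^∞ s^α e^{−((1+θ)−s)/w} w^{−(2+α)} dw ds) / (∫₀^∞ (w/(1+w)) w^{−(1+α)} dw). Then for every θ > 0, Λ̂(θ) − Λ̃(θ) = Λ⁰(θ); that is, the aging limit function Λ = Λ̂ − Λ̃ equals the arcsine distribution function. -/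
open MeasureTheory Set Real

/-- `G(α) = ∫₀^∞ t^α e^{-t} dt`. -/
noncomputable def Gfun (α : ℝ) : ℝ := ∫ t in Set.Ioi (0:ℝ), t ^ α * Real.exp (-t)

/-- The function `Λ̂` of the paper. -/
noncomputable def LamHat (α θ : ℝ) : ℝ :=
  (1 / Gfun α) *
    ((∫ w in Set.Ioi (0:ℝ), Real.exp (-θ / w) * w ^ (-(1 + α))) /
      (∫ w in Set.Ioi (0:ℝ), (w / (1 + w)) * w ^ (-(1 + α))))

/-- The function `Λ̃` of the paper. -/
noncomputable def LamTilde (α θ : ℝ) : ℝ :=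
  (1 / Gfun α) *
    ((∫ s in Set.Ioo (0:ℝ) 1, ∫ w in Set.Ioi (0:ℝ),
        s ^ α * Real.exp (-((1 + θ) - s) / w) * w ^ (-(2 + α))) /
      (∫ w in Set.Ioi (0:ℝ), (w / (1 + w)) * w ^ (-(1 + α))))


lemma aux_inv_gamma {c r : ℝ} (hc : 0 < c) (hr : 0 < r) :
    ∫ w in Ioi (0:ℝ), Real.exp (-c/w) * w ^ (-(1+r)) = c ^ (-r) * Real.Gamma r := by
  have himg : (fun t : ℝ => c / t) '' Ioi (0:ℝ) = Ioi 0 := by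
    ext y; constructor
    · rintro ⟨t, ht, rfl⟩; exact div_pos hc ht
    · intro hy; exact ⟨c / y, div_pos hc hy, by field_simp⟩
  have hderiv : ∀ x ∈ Ioi (0:ℝ), HasDerivWithinAt (fun t : ℝ => c / t) (-(c / x^2)) (Ioi 0) x := by
    intro x hx
    have h := ((hasDerivAt_inv (ne_of_gt (mem_Ioi.mp hx))).const_mul c).hasDerivWithinAt
      (s := Ioi (0:ℝ))
    simpa [div_eq_mul_inv, mul_neg] using h
  have hinj : InjOn (fun t : ℝ => c / t) (Ioi 0) := by
    intro a ha b hb h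
    simp only [mem_Ioi] at ha hb
    field_simp at h
    exact h.symm
  have key := integral_image_eq_integral_abs_deriv_smul measurableSet_Ioi hderiv hinj
      (fun w => Real.exp (-c/w) * w ^ (-(1+r)))
  rw [himg] at key
  rw [key]
  have hcongr : ∀ t ∈ Ioi (0:ℝ),
      |(-(c / t^2))| • (Real.exp (-c/(c/t)) * (c/t) ^ (-(1+r)))
      = c ^ (-r) * (t ^ (r-1) * Real.exp (-(1*t))) := by
    intro t ht
    have ht : (0:ℝ) < t := ht
    have h1 : -c / (c / t) = -t := by field_simp
    rw [smul_eq_mul, abs_neg, abs_of_nonneg (by positivity), h1,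
      Real.div_rpow hc.le ht.le, Real.rpow_neg ht.le]
    have h2 : c ^ (-(1+r)) / (t ^ (1+r))⁻¹ = c ^ (-(1+r)) * t ^ (1+r) := by
      rw [div_eq_mul_inv, inv_inv]
    have e1 : c / t^2 = c * (t ^ ((-2 : ℝ))) := by
      rw [Real.rpow_neg ht.le, show ((2:ℝ)) = ((2:ℕ):ℝ) from by norm_num,
        Real.rpow_natCast, div_eq_mul_inv]
    rw [h2, e1]
    have e2 : c * (c ^ (-(1+r))) = c ^ (-r) := by
      nth_rewrite 1 [← Real.rpow_one c]
      rw [← Real.rpow_add hc]; congr 1; ring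
    have e3 : t ^ ((-2:ℝ)) * t ^ (1+r) = t ^ (r - 1) := by
      rw [← Real.rpow_add ht]; congr 1; ring
    calc c * t ^ (-2:ℝ) * (Real.exp (-t) * (c ^ (-(1+r)) * t ^ (1+r)))
        = (c * c ^ (-(1+r))) * ((t ^ (-2:ℝ) * t ^ (1+r)) * Real.exp (-t)) := by ring
      _ = c ^ (-r) * (t ^ (r-1) * Real.exp (-(1*t))) := by rw [e2, e3, one_mul]
  rw [setIntegral_congr_fun measurableSet_Ioi hcongr, MeasureTheory.integral_const_mul _ _,
    integral_rpow_mul_exp_neg_mul_Ioi hr one_pos]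
  norm_num

lemma aux_beta01 {α : ℝ} (h0 : 0 < α) (h1 : α < 1) :
    ∫ s in Ioo (0:ℝ) 1, s ^ (-α) * (1-s) ^ (α-1) = π / Real.sin (π * α) := by
  have hb := Complex.Gamma_mul_Gamma_eq_betaIntegral (s := (1-α:ℂ)) (t := (α:ℂ))
    (by simp; linarith) (by simpa using h0)
  have hone : (1 - α + α : ℂ) = 1 := by ring
  rw [hone, Complex.Gamma_one, one_mul] at hb
  have hbeta : Complex.betaIntegral (1-α) α
      = ((∫ s in (0:ℝ)..1, s ^ (-α) * (1-s) ^ (α-1) : ℝ) : ℂ) := by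
    rw [Complex.betaIntegral, ← intervalIntegral.integral_ofReal]
    apply intervalIntegral.integral_congr
    intro x hx
    rw [uIcc_of_le zero_le_one] at hx
    obtain ⟨hx0, hx1⟩ := hx
    simp only []
    rw [show (1 - (α:ℂ) - 1) = ((-α : ℝ) : ℂ) by push_cast; ring,
      show ((α:ℂ) - 1) = ((α - 1 : ℝ) : ℂ) by push_cast; ring,
      show (1 - (x:ℂ)) = ((1 - x : ℝ) : ℂ) by push_cast; ring,
      ← Complex.ofReal_cpow hx0, ← Complex.ofReal_cpow (by linarith : (0:ℝ) ≤ 1 - x)]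
    push_cast
    ring
  rw [hbeta] at hb
  have hg : ((Real.Gamma (1-α) * Real.Gamma α : ℝ) : ℂ)
      = ((∫ s in (0:ℝ)..1, s ^ (-α) * (1-s) ^ (α-1) : ℝ) : ℂ) := by
    rw [← hb]; push_cast [← Complex.Gamma_ofReal]; norm_num
  have hreal := Complex.ofReal_inj.mp hg
  rw [intervalIntegral.integral_of_le zero_le_one, integral_Ioc_eq_integral_Ioo] at hreal
  rw [← hreal, mul_comm, Real.Gamma_mul_Gamma_one_sub]

lemma aux_D {α : ℝ} (h0 : 0 < α) (h1 : α < 1) :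
    ∫ w in Ioi (0:ℝ), (w/(1+w)) * w ^ (-(1+α))
      = ∫ s in Ioo (0:ℝ) 1, s ^ (-α) * (1-s) ^ (α-1) := by
  have himg : (fun s : ℝ => s / (1-s)) '' Ioo (0:ℝ) 1 = Ioi 0 := by
    ext y; constructor
    · rintro ⟨s, ⟨hs0, hs1⟩, rfl⟩
      exact div_pos hs0 (by linarith)
    · intro hy
      have hy : (0:ℝ) < y := hy
      refine ⟨y / (1+y), ⟨by positivity, by rw [div_lt_one (by linarith)]; linarith⟩, ?_⟩
      have h1y : (1:ℝ) + y ≠ 0 := by positivity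
      field_simp
      ring
  have hderiv : ∀ x ∈ Ioo (0:ℝ) 1, HasDerivWithinAt (fun s : ℝ => s / (1-s))
      (((1-x)^2)⁻¹) (Ioo 0 1) x := by
    intro x hx
    obtain ⟨hx0, hx1⟩ := hx
    have hne : (1:ℝ) - x ≠ 0 := by linarith
    have hin : HasDerivAt (fun s : ℝ => 1 - s) (-1) x := by
      simpa using (hasDerivAt_id x).const_sub 1
    have hinv := hin.inv hne
    have hmul := (hasDerivAt_id x).mul hinv
    have : HasDerivAt (fun s : ℝ => s / (1-s))
        (1 * (1-x)⁻¹ + x * (-(-1) / (1-x)^2)) x := by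
      have hfun : (fun s : ℝ => s / (1-s)) = id * (fun s => 1 - s)⁻¹ := by
        funext s; simp [div_eq_mul_inv]
      rw [hfun]; exact hmul
    have heq : 1 * (1-x)⁻¹ + x * (-(-1) / (1-x)^2) = ((1-x)^2)⁻¹ := by
      field_simp
      ring
    rw [heq] at this
    exact this.hasDerivWithinAt
  have hinj : InjOn (fun s : ℝ => s / (1-s)) (Ioo 0 1) := by
    intro a ha b hb h
    obtain ⟨ha0, ha1⟩ := ha; obtain ⟨hb0, hb1⟩ := hb
    have hna : (1:ℝ) - a ≠ 0 := by linarith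
    have hnb : (1:ℝ) - b ≠ 0 := by linarith
    field_simp at h
    ring_nf at h
    linarith
  have key := integral_image_eq_integral_abs_deriv_smul measurableSet_Ioo hderiv hinj
      (fun w => (w/(1+w)) * w ^ (-(1+α)))
  rw [himg] at key
  rw [key]
  apply setIntegral_congr_fun measurableSet_Ioo
  intro s hs
  obtain ⟨hs0, hs1⟩ := hs
  have hne : (0:ℝ) < 1 - s := by linarith
  simp only [smul_eq_mul]
  have e0 : (s / (1-s)) / (1 + s / (1-s)) = s := by
    rw [show (1 + s / (1-s)) = (1-s+s)/(1-s) by field_simp]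
    field_simp
    ring
  rw [e0, abs_of_nonneg (by positivity), Real.div_rpow hs0.le hne.le]
  rw [Real.rpow_neg hne.le]
  have h2 : s ^ (-(1+α)) / ((1-s) ^ (1+α))⁻¹ = s ^ (-(1+α)) * (1-s) ^ (1+α) := by
    rw [div_eq_mul_inv, inv_inv]
  rw [h2]
  have e2 : s * s ^ (-(1+α)) = s ^ (-α) := by
    nth_rewrite 1 [← Real.rpow_one s]
    rw [← Real.rpow_add hs0]; congr 1; ring
  have e3 : ((1-s)^2)⁻¹ * (1-s) ^ (1+α) = (1-s) ^ (α-1) := by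
    rw [show ((1-s)^2 : ℝ) = (1-s) ^ ((2:ℕ):ℝ) from (Real.rpow_natCast _ 2).symm,
      ← Real.rpow_neg hne.le, ← Real.rpow_add hne]
    congr 1; push_cast; ring
  calc ((1-s)^2)⁻¹ * (s * (s ^ (-(1+α)) * (1-s) ^ (1+α)))
      = (s * s ^ (-(1+α))) * (((1-s)^2)⁻¹ * (1-s) ^ (1+α)) := by ring
    _ = s ^ (-α) * (1-s) ^ (α-1) := by rw [e2, e3]


open intervalIntegral in
lemma aux_J {α θ : ℝ} (h0 : 0 < α) (h1 : α < 1) (hθ : 0 < θ) :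
    ∫ s in Ioo (θ/(1+θ)) 1, s ^ (-α) * (1-s) ^ (α-1)
      = ∫ x in Ioo (0:ℝ) 1, x ^ (α-1) * (1+θ-x) ^ (-α) := by
  have hθ1 : (0:ℝ) < 1 + θ := by linarith
  have himg : (fun x : ℝ => 1 - x/(1+θ)) '' Ioo (0:ℝ) 1 = Ioo (θ/(1+θ)) 1 := by
    ext y; constructor
    · rintro ⟨x, ⟨hx0, hx1⟩, rfl⟩
      have hlt : x / (1+θ) < 1 / (1+θ) := by gcongr
      have hpos : 0 < x / (1+θ) := by positivity
      have he : θ/(1+θ) = 1 - 1/(1+θ) := by field_simp; ring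
      constructor
      · simp only []; rw [he]; linarith
      · simp only []; linarith
    · rintro ⟨hy0, hy1⟩
      refine ⟨(1+θ) * (1-y), ⟨by nlinarith, ?_⟩, by field_simp; ring⟩
      rw [div_lt_iff₀ hθ1] at hy0
      nlinarith
  have hderiv : ∀ x ∈ Ioo (0:ℝ) 1, HasDerivWithinAt (fun x : ℝ => 1 - x/(1+θ))
      (-(1+θ)⁻¹) (Ioo 0 1) x := by
    intro x _
    have : HasDerivAt (fun x : ℝ => 1 - x/(1+θ)) (-(1+θ)⁻¹) x := by
      simpa [div_eq_mul_inv] using ((hasDerivAt_id x).mul_const (1+θ)⁻¹).const_sub 1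
    exact this.hasDerivWithinAt
  have hinj : InjOn (fun x : ℝ => 1 - x/(1+θ)) (Ioo 0 1) := by
    intro a _ b _ h
    simp only at h
    field_simp at h
    linarith
  have key := integral_image_eq_integral_abs_deriv_smul measurableSet_Ioo hderiv hinj
      (fun s => s ^ (-α) * (1-s) ^ (α-1))
  rw [himg] at key
  rw [key]
  apply setIntegral_congr_fun measurableSet_Ioo
  intro x hx
  obtain ⟨hx0, hx1⟩ := hx
  have hbx : (0:ℝ) < 1 + θ - x := by linarith
  simp only [smul_eq_mul]
  have e0 : 1 - x/(1+θ) = (1+θ-x)/(1+θ) := by field_simp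
  have e1 : 1 - (1+θ-x)/(1+θ) = x/(1+θ) := by field_simp; ring
  rw [abs_neg, abs_of_nonneg (by positivity), e0, e1,
    Real.div_rpow hbx.le hθ1.le, Real.div_rpow hx0.le hθ1.le]
  have e2 : (1+θ)⁻¹ * ((1+θ-x) ^ (-α) / (1+θ) ^ (-α) * (x ^ (α-1) / (1+θ) ^ (α-1)))
      = (x ^ (α-1) * (1+θ-x) ^ (-α)) * ((1+θ)⁻¹ / ((1+θ) ^ (-α) * (1+θ) ^ (α-1))) := by
    ring
  rw [e2, ← Real.rpow_add hθ1]
  norm_num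
  rw [show (-α + (α-1) : ℝ) = -1 by ring, Real.rpow_neg_one]
  field_simp


open intervalIntegral in
lemma aux_FTC {α θ : ℝ} (h0 : 0 < α) (h1 : α < 1) (hθ : 0 < θ) :
    (∫ x in Ioo (0:ℝ) 1, x ^ (α-1) * (1+θ-x) ^ (-α))
      + (∫ s in Ioo (0:ℝ) 1, s ^ α * (1+θ-s) ^ (-(1+α))) = θ ^ (-α) / α := by
  set f1 : ℝ → ℝ := fun x => x ^ (α-1) * (1+θ-x) ^ (-α) with hf1
  set f2 : ℝ → ℝ := fun x => x ^ α * (1+θ-x) ^ (-(1+α)) with hf2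
  set F : ℝ → ℝ := fun x => x ^ α * (1+θ-x) ^ (-α) / α with hF
  have hbpos : ∀ x : ℝ, x ≤ 1 → (0:ℝ) < 1 + θ - x := fun x hx => by linarith
  -- continuity of F on Icc 0 1
  have hcont : ContinuousOn F (Icc 0 1) := by
    apply ContinuousOn.div_const
    apply ContinuousOn.mul
    · intro x _
      exact (Real.continuousAt_rpow_const x α (Or.inr h0.le)).continuousWithinAt
    · apply ContinuousOn.rpow_const
      · exact (continuous_const.sub continuous_id).continuousOn
      · intro x hx
        exact Or.inl (ne_of_gt (hbpos x hx.2))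
  -- derivative on Ioo
  have hderiv : ∀ x ∈ Ioo (0:ℝ) 1, HasDerivWithinAt F (f1 x + f2 x) (Ioi x) x := by
    intro x hx
    obtain ⟨hx0, hx1⟩ := hx
    have hb : (0:ℝ) < 1 + θ - x := hbpos x hx1.le
    have hu : HasDerivAt (fun x : ℝ => x ^ α) (α * x ^ (α-1)) x :=
      Real.hasDerivAt_rpow_const (Or.inl (ne_of_gt hx0))
    have hv0 : HasDerivAt (fun x : ℝ => 1 + θ - x) (-1) x := by
      simpa using (hasDerivAt_id x).const_sub (1+θ)
    have hv : HasDerivAt (fun x : ℝ => (1+θ-x) ^ (-α))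
        (-1 * (-α) * (1+θ-x) ^ (-α-1)) x :=
      hv0.rpow_const (Or.inl (ne_of_gt hb))
    have hF' : HasDerivAt F ((α * x ^ (α-1) * (1+θ-x) ^ (-α)
        + x ^ α * (-1 * (-α) * (1+θ-x) ^ (-α-1))) / α) x := (hu.mul hv).div_const α
    have heq : (α * x ^ (α-1) * (1+θ-x) ^ (-α)
        + x ^ α * (-1 * (-α) * (1+θ-x) ^ (-α-1))) / α = f1 x + f2 x := by
      rw [hf1, hf2]
      simp only []
      rw [show (-(1+α) : ℝ) = -α-1 by ring]
      field_simp
    rw [heq] at hF'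
    exact hF'.hasDerivWithinAt
  -- integrability
  have hcont2 : ContinuousOn (fun x : ℝ => (1+θ-x) ^ (-α)) (uIcc (0:ℝ) 1) := by
    apply ContinuousOn.rpow_const
    · exact (continuous_const.sub continuous_id).continuousOn
    · intro x hx
      rw [uIcc_of_le zero_le_one] at hx
      exact Or.inl (ne_of_gt (hbpos x hx.2))
  have hint1 : IntervalIntegrable f1 volume 0 1 :=
    (intervalIntegrable_rpow' (by linarith)).mul_continuousOn hcont2
  have hint2 : IntervalIntegrable f2 volume 0 1 := by
    apply ContinuousOn.intervalIntegrable
    apply ContinuousOn.mul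
    · intro x _
      exact (Real.continuousAt_rpow_const x α (Or.inr h0.le)).continuousWithinAt
    · apply ContinuousOn.rpow_const
      · exact (continuous_const.sub continuous_id).continuousOn
      · intro x hx
        rw [uIcc_of_le zero_le_one] at hx
        exact Or.inl (ne_of_gt (hbpos x hx.2))
  have hsum := integral_eq_sub_of_hasDeriv_right_of_le zero_le_one hcont hderiv
    (hint1.add hint2)
  rw [integral_add hint1 hint2] at hsum
  have hF1 : F 1 = θ ^ (-α) / α := by
    rw [hF]; simp only []
    norm_num
  have hF0 : F 0 = 0 := by
    rw [hF]; simp only []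
    rw [Real.zero_rpow (ne_of_gt h0)]
    ring
  rw [hF1, hF0, sub_zero] at hsum
  rw [← hsum, integral_of_le zero_le_one, integral_of_le zero_le_one,
    integral_Ioc_eq_integral_Ioo, integral_Ioc_eq_integral_Ioo]

/-- the aging limit function `Λ = Λ̂ − Λ̃` equals the arcsine
distribution function `Λ⁰`. -/
theorem stmt_17 (α : ℝ) (hα : α ∈ Set.Ioo (0:ℝ) 1) :
    ∀ θ : ℝ, 0 < θ → LamHat α θ - LamTilde α θ = arcsineCDF α θ := by
  obtain ⟨h0, h1⟩ := hα
  intro θ hθ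
  have hΓ : 0 < Real.Gamma α := Real.Gamma_pos_of_pos h0
  have hsin : 0 < Real.sin (π * α) := by
    apply Real.sin_pos_of_pos_of_lt_pi
    · positivity
    · nlinarith [Real.pi_pos]
  -- G
  have hG : Gfun α = α * Real.Gamma α := by
    rw [Gfun]
    have hc : ∀ t ∈ Ioi (0:ℝ), t ^ α * Real.exp (-t)
        = t ^ ((α+1)-1) * Real.exp (-(1*t)) := by
      intro t _; norm_num
    rw [setIntegral_congr_fun measurableSet_Ioi hc,
      integral_rpow_mul_exp_neg_mul_Ioi (by linarith) one_pos]
    rw [Real.Gamma_add_one (ne_of_gt h0)]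
    norm_num
  -- denominator
  have hD : ∫ w in Ioi (0:ℝ), (w/(1+w)) * w ^ (-(1+α)) = π / Real.sin (π * α) := by
    rw [aux_D h0 h1, aux_beta01 h0 h1]
  -- hat numerator
  have hHat : ∫ w in Ioi (0:ℝ), Real.exp (-θ/w) * w ^ (-(1+α))
      = θ ^ (-α) * Real.Gamma α := aux_inv_gamma hθ h0
  -- tilde numerator
  set I : ℝ := ∫ s in Ioo (0:ℝ) 1, s ^ α * (1+θ-s) ^ (-(1+α)) with hI
  have hTilde : (∫ s in Ioo (0:ℝ) 1, ∫ w in Ioi (0:ℝ),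
      s ^ α * Real.exp (-((1 + θ) - s)/w) * w ^ (-(2+α)))
      = Real.Gamma (1+α) * I := by
    have hc : ∀ s ∈ Ioo (0:ℝ) 1, (∫ w in Ioi (0:ℝ),
        s ^ α * Real.exp (-((1 + θ) - s)/w) * w ^ (-(2+α)))
        = Real.Gamma (1+α) * (s ^ α * (1+θ-s) ^ (-(1+α))) := by
      intro s hs
      obtain ⟨hs0, hs1⟩ := hs
      have hcs : (0:ℝ) < 1 + θ - s := by linarith
      have e : ∀ w ∈ Ioi (0:ℝ), s ^ α * Real.exp (-((1 + θ) - s)/w) * w ^ (-(2+α))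
          = s ^ α * (Real.exp (-(1+θ-s)/w) * w ^ (-(1+(1+α)))) := by
        intro w _
        rw [show (-(2+α) : ℝ) = -(1+(1+α)) by ring]
        ring
      rw [setIntegral_congr_fun measurableSet_Ioi e, MeasureTheory.integral_const_mul,
        aux_inv_gamma hcs (by linarith)]
      ring
    rw [setIntegral_congr_fun measurableSet_Ioo hc, MeasureTheory.integral_const_mul]
  -- arcsine side
  have hJ : (∫ s in Ioo (θ/(1+θ)) 1, s ^ (-α) * (1-s) ^ (α-1))
      = θ ^ (-α) / α - I := by
    rw [aux_J h0 h1 hθ]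
    have := aux_FTC h0 h1 hθ
    rw [← hI] at this
    linarith
  -- assemble
  rw [LamHat, LamTilde, arcsineCDF, hG, hD, hHat, hTilde, hJ,
    show (1:ℝ) + α = α + 1 from add_comm 1 α,
    Real.Gamma_add_one (ne_of_gt h0)]
  field_simp
end

section
/- Fix α ∈ (0,1) and set G(α) = ∫₀^∞ t^α e^{−t} dt. Define ρ : (0,∞) → ℝ by ρ(z) = (G(α) ∫₀^∞ w^{−α}(1+w)^{−1} dw)^{−1} z^{α−1} ∫₀^1 α s^{α−1} e^{−(1−s)z} ds. Then ρ is a probability density, i.e. ∫₀^∞ ρ(z) dz = 1, and its Laplace transform is the arcsine distribution function: ∫₀^∞ e^{−θz} ρ(z) dz = Λ⁰(θ) for every θ > 0. -/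
open MeasureTheory Set Real

/-- The density `ρ` of the paper (Remark 5.25). -/
noncomputable def rhoFun (α z : ℝ) : ℝ :=
  (Gfun α * ∫ w in Set.Ioi (0:ℝ), w ^ (-α) * (1 + w)⁻¹)⁻¹ *
    (z ^ (α - 1) * ∫ s in Set.Ioo (0:ℝ) 1, α * s ^ (α - 1) * Real.exp (-(1 - s) * z))


lemma betaIntegrable {a b : ℝ} (ha : 0 < a) (hb : 0 < b) :
    IntegrableOn (fun s : ℝ => s ^ (a-1) * (1-s) ^ (b-1)) (Set.Ioo 0 1) := by
  have h := Complex.betaIntegral_convergent (u := a) (v := b) (by simpa) (by simpa)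
  rw [intervalIntegrable_iff_integrableOn_Ioc_of_le zero_le_one] at h
  have hnorm : IntegrableOn (fun x : ℝ => ‖(x:ℂ) ^ ((a:ℂ)-1) * (1 - (x:ℂ)) ^ ((b:ℂ)-1)‖) (Set.Ioo 0 1) :=
    IntegrableOn.mono_set h.norm Ioo_subset_Ioc_self
  refine hnorm.congr ?_
  filter_upwards [ae_restrict_mem measurableSet_Ioo] with x hx
  have hx0 : (0:ℝ) < x := hx.1
  have hx1 : (0:ℝ) < 1 - x := by linarith [hx.2]
  rw [norm_mul]
  have h1 : ‖(x:ℂ) ^ ((a:ℂ)-1)‖ = x ^ (a-1) := by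
    rw [Complex.norm_cpow_eq_rpow_re_of_pos hx0]
    norm_num
  have h2 : ‖(1 - (x:ℂ)) ^ ((b:ℂ)-1)‖ = (1-x) ^ (b-1) := by
    rw [show (1 - (x:ℂ)) = ((1-x:ℝ):ℂ) by push_cast; ring,
      Complex.norm_cpow_eq_rpow_re_of_pos hx1]
    norm_num
  rw [h1, h2]

lemma betaValue {a b : ℝ} (ha : 0 < a) (hb : 0 < b) :
    ∫ s in Set.Ioo (0:ℝ) 1, s ^ (a-1) * (1-s) ^ (b-1)
      = Real.Gamma a * Real.Gamma b / Real.Gamma (a+b) := by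
  have key : Complex.betaIntegral a b
      = ((∫ s in Set.Ioo (0:ℝ) 1, s ^ (a-1) * (1-s) ^ (b-1) : ℝ) : ℂ) := by
    rw [Complex.betaIntegral, intervalIntegral.integral_of_le zero_le_one,
      MeasureTheory.integral_Ioc_eq_integral_Ioo]
    refine Eq.trans (setIntegral_congr_fun measurableSet_Ioo (fun x hx => ?_)) integral_ofReal
    have hx0 : (0:ℝ) ≤ x := hx.1.le
    have hx1 : (0:ℝ) ≤ 1 - x := by linarith [hx.2]
    rw [show ((a:ℂ)-1) = ((a-1:ℝ):ℂ) by push_cast; ring,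
        show ((b:ℂ)-1) = ((b-1:ℝ):ℂ) by push_cast; ring,
        show (1-(x:ℂ)) = ((1-x:ℝ):ℂ) by push_cast; ring,
        ← Complex.ofReal_cpow hx0, ← Complex.ofReal_cpow hx1, ← Complex.ofReal_mul]
    norm_cast
  have h2 := Complex.Gamma_mul_Gamma_eq_betaIntegral
    (s := a) (t := b) (by simpa) (by simpa)
  rw [key, show ((a:ℂ) + b) = ((a+b : ℝ):ℂ) by push_cast; ring] at h2
  rw [Complex.Gamma_ofReal, Complex.Gamma_ofReal, Complex.Gamma_ofReal] at h2
  have hne : Real.Gamma (a+b) ≠ 0 := (Real.Gamma_pos_of_pos (by linarith)).ne'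
  have h3 : Real.Gamma a * Real.Gamma b
      = Real.Gamma (a+b) * ∫ s in Set.Ioo (0:ℝ) 1, s ^ (a-1) * (1-s) ^ (b-1) := by
    exact_mod_cast h2
  rw [h3]
  field_simp

lemma gammaIntegrable {a c : ℝ} (ha : 0 < a) (hc : 0 < c) :
    IntegrableOn (fun z : ℝ => z ^ (a-1) * Real.exp (-(c*z))) (Set.Ioi 0) := by
  have := integrableOn_rpow_mul_exp_neg_mul_rpow (p := 1) (s := a-1) (b := c)
    (by linarith) one_pos hc
  simpa [Real.rpow_one, neg_mul] using this


lemma Ival (α : ℝ) :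
    ∫ w in Set.Ioi (0:ℝ), w ^ (-α) * (1 + w)⁻¹
      = ∫ s in Set.Ioo (0:ℝ) 1, s ^ (-α) * (1-s) ^ (α-1) := by
  have himg : (fun t : ℝ => t / (1 - t)) '' Set.Ioo 0 1 = Set.Ioi 0 := by
    ext w
    constructor
    · rintro ⟨t, ht, rfl⟩
      exact div_pos ht.1 (by linarith [ht.2])
    · intro hw
      refine ⟨w / (1 + w), ⟨div_pos hw (by linarith [mem_Ioi.mp hw]), ?_⟩, ?_⟩
      · rw [div_lt_one (by linarith [mem_Ioi.mp hw])]; linarith [mem_Ioi.mp hw]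
      · have h1w : (0:ℝ) < 1 + w := by linarith [mem_Ioi.mp hw]
        field_simp
        ring
  have hderiv : ∀ t ∈ Set.Ioo (0:ℝ) 1,
      HasDerivWithinAt (fun t : ℝ => t / (1 - t)) (((1 - t) ^ 2)⁻¹) (Set.Ioo 0 1) t := by
    intro t ht
    have hne : (1:ℝ) - t ≠ 0 := by nlinarith [ht.2]
    have h := (hasDerivAt_id t).div ((hasDerivAt_id t).const_sub 1) hne
    simp only [id_eq, Pi.div_def] at h
    exact h.hasDerivWithinAt.congr_deriv (by ring)
  have hinj : Set.InjOn (fun t : ℝ => t / (1 - t)) (Set.Ioo 0 1) := by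
    intro a ha b hb hab
    have h1 : (1:ℝ) - a ≠ 0 := by nlinarith [ha.2]
    have h2 : (1:ℝ) - b ≠ 0 := by nlinarith [hb.2]
    field_simp at hab
    nlinarith [hab]
  rw [← himg, integral_image_eq_integral_abs_deriv_smul measurableSet_Ioo hderiv hinj]
  refine setIntegral_congr_fun measurableSet_Ioo (fun t ht => ?_)
  have ht0 : (0:ℝ) < t := ht.1
  have ht1 : (0:ℝ) < 1 - t := by linarith [ht.2]
  have h1 : (1 + t / (1 - t))⁻¹ = 1 - t := by
    rw [show 1 + t / (1 - t) = (1 - t)⁻¹ by field_simp; ring, inv_inv]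
  have h2 : (t / (1 - t)) ^ (-α) = t ^ (-α) / (1 - t) ^ (-α) :=
    Real.div_rpow ht0.le ht1.le (-α)
  rw [smul_eq_mul, h1, h2, abs_of_pos (by positivity)]
  rw [Real.rpow_neg ht1.le, Real.rpow_sub ht1, Real.rpow_one]
  have hX : (0:ℝ) < (1 - t) ^ α := Real.rpow_pos_of_pos ht1 α
  field_simp

lemma Esub (α θ : ℝ) (hθ : 0 < θ) :
    ∫ s in Set.Ioo (0:ℝ) 1, s ^ (α-1) * (θ+1-s) ^ (-α)
      = ∫ u in Set.Ioo (θ/(1+θ)) 1, u ^ (-α) * (1-u) ^ (α-1) := by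
  have h1θ : (0:ℝ) < 1 + θ := by linarith
  have himg : (fun u : ℝ => (1+θ) * (1-u)) '' Set.Ioo (θ/(1+θ)) 1 = Set.Ioo 0 1 := by
    ext x
    constructor
    · rintro ⟨u, hu, rfl⟩
      have h1 : θ < u * (1+θ) := by
        have := (div_lt_iff₀ h1θ).mp hu.1; linarith
      refine ⟨show (0:ℝ) < (1+θ) * (1-u) by nlinarith [hu.2], show (1+θ) * (1-u) < 1 by nlinarith⟩
    · intro hx
      refine ⟨1 - x/(1+θ), ⟨?_, ?_⟩, ?_⟩
      · rw [div_lt_iff₀ h1θ]; nlinarith [div_mul_cancel₀ x h1θ.ne', hx.2]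
      · have : 0 < x/(1+θ) := div_pos hx.1 h1θ; linarith
      · field_simp
        ring
  have hderiv : ∀ u ∈ Set.Ioo (θ/(1+θ)) 1,
      HasDerivWithinAt (fun u : ℝ => (1+θ) * (1-u)) (-(1+θ)) (Set.Ioo (θ/(1+θ)) 1) u := by
    intro u hu
    have h := ((hasDerivAt_id u).const_sub 1).const_mul (1+θ)
    simpa using h.hasDerivWithinAt
  have hinj : Set.InjOn (fun u : ℝ => (1+θ) * (1-u)) (Set.Ioo (θ/(1+θ)) 1) := by
    intro a _ b _ hab
    have := mul_left_cancel₀ h1θ.ne' hab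
    linarith [this]
  rw [← himg, integral_image_eq_integral_abs_deriv_smul measurableSet_Ioo hderiv hinj]
  refine setIntegral_congr_fun measurableSet_Ioo (fun u hu => ?_)
  have hu0 : (0:ℝ) < u := lt_trans (div_pos hθ h1θ) hu.1
  have hu1 : (0:ℝ) < 1 - u := by linarith [hu.2]
  have e1 : θ + 1 - (1+θ) * (1-u) = (1+θ) * u := by ring
  rw [smul_eq_mul, e1, abs_of_neg (by linarith), neg_neg]
  rw [Real.mul_rpow h1θ.le hu1.le, Real.mul_rpow h1θ.le hu0.le]
  have e2 : (1+θ) * ((1+θ) ^ (α-1) * (1-u) ^ (α-1) * ((1+θ) ^ (-α) * u ^ (-α)))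
      = ((1+θ) * ((1+θ) ^ (α-1) * (1+θ) ^ (-α))) * ((1-u) ^ (α-1) * u ^ (-α)) := by ring
  rw [e2, ← Real.rpow_add h1θ, show α - 1 + -α = -1 by ring, Real.rpow_neg_one,
    mul_inv_cancel₀ h1θ.ne']
  ring

lemma mainSwap {α : ℝ} (hα0 : 0 < α) (hα1 : α < 1) (θ : ℝ) (hθ : 0 ≤ θ) :
    (∫ z in Set.Ioi (0:ℝ), Real.exp (-θ * z) *
        (z ^ (α-1) * ∫ s in Set.Ioo (0:ℝ) 1, α * s ^ (α-1) * Real.exp (-(1-s) * z)))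
      = α * Real.Gamma α * ∫ s in Set.Ioo (0:ℝ) 1, s ^ (α-1) * (θ+1-s) ^ (-α) := by
  set F : ℝ → ℝ → ℝ := fun z s => z ^ (α-1) * Real.exp (-((θ+1-s) * z)) * (α * s ^ (α-1)) with hF
  have hΓ : 0 < Real.Gamma α := Real.Gamma_pos_of_pos hα0
  -- the exact value of the inner z-integral for s ∈ (0,1)
  have hinner : ∀ s ∈ Set.Ioo (0:ℝ) 1,
      (∫ z in Set.Ioi (0:ℝ), F z s)
        = (α * Real.Gamma α) * (s ^ (α-1) * (θ+1-s) ^ (-α)) := by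
    intro s hs
    have hc : (0:ℝ) < θ + 1 - s := by linarith [hs.2]
    have := Real.integral_rpow_mul_exp_neg_mul_Ioi hα0 hc
    calc (∫ z in Set.Ioi (0:ℝ), F z s)
        = (∫ z in Set.Ioi (0:ℝ), z ^ (α-1) * Real.exp (-((θ+1-s) * z))) * (α * s ^ (α-1)) := by
          rw [← integral_mul_const]
      _ = ((1/(θ+1-s)) ^ α * Real.Gamma α) * (α * s ^ (α-1)) := by rw [this]
      _ = (α * Real.Gamma α) * (s ^ (α-1) * (θ+1-s) ^ (-α)) := by
          rw [one_div, ← Real.rpow_neg_one (θ+1-s), ← Real.rpow_mul hc.le,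
            show (-1:ℝ) * α = -α by ring]
          ring
  -- measurability
  have hmeas : AEStronglyMeasurable (fun p : ℝ × ℝ => F p.1 p.2)
      ((volume.restrict (Set.Ioi 0)).prod (volume.restrict (Set.Ioo 0 1))) := by
    apply Measurable.aestronglyMeasurable
    fun_prop
  -- integrability on the product
  have hint : Integrable (fun p : ℝ × ℝ => F p.1 p.2)
      ((volume.restrict (Set.Ioi 0)).prod (volume.restrict (Set.Ioo 0 1))) := by
    rw [integrable_prod_iff' hmeas]
    constructor
    · filter_upwards [ae_restrict_mem measurableSet_Ioo] with s hs
      have hc : (0:ℝ) < θ + 1 - s := by linarith [hs.2]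
      exact (gammaIntegrable hα0 hc).mul_const _
    · have hb0 : IntegrableOn (fun s : ℝ => s ^ (α-1) * (1-s) ^ ((1-α)-1)) (Set.Ioo 0 1) :=
        betaIntegrable hα0 (by linarith)
      rw [show (1:ℝ) - α - 1 = -α by ring] at hb0
      have hg : Integrable (fun s : ℝ => (α * Real.Gamma α) * (s ^ (α-1) * (θ+1-s) ^ (-α)))
          (volume.restrict (Set.Ioo 0 1)) := by
        refine Integrable.mono (hb0.const_mul (α * Real.Gamma α)) ?_ ?_
        · apply Measurable.aestronglyMeasurable
          fun_prop
        · filter_upwards [ae_restrict_mem measurableSet_Ioo] with s hs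
          have hs0 : (0:ℝ) < s := hs.1
          have hs1 : (0:ℝ) < 1 - s := by linarith [hs.2]
          have hc : (0:ℝ) < θ + 1 - s := by linarith [hs.2]
          have hle : (θ+1-s) ^ (-α) ≤ (1-s) ^ (-α) :=
            Real.rpow_le_rpow_of_nonpos hs1 (by linarith) (by linarith)
          rw [Real.norm_eq_abs, Real.norm_eq_abs, abs_of_nonneg (by positivity),
            abs_of_nonneg (by positivity)]
          have h1 : s ^ (α-1) * (θ+1-s) ^ (-α) ≤ s ^ (α-1) * (1-s) ^ (-α) :=
            mul_le_mul_of_nonneg_left hle (by positivity)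
          exact mul_le_mul_of_nonneg_left h1 (by positivity)
      refine hg.congr ?_
      filter_upwards [ae_restrict_mem measurableSet_Ioo] with s hs
      have hs0 : (0:ℝ) < s := hs.1
      have hc : (0:ℝ) < θ + 1 - s := by linarith [hs.2]
      rw [← hinner s hs]
      refine (setIntegral_congr_fun measurableSet_Ioi (fun z hz => ?_))
      have hz0 : (0:ℝ) < z := hz
      rw [Real.norm_eq_abs, abs_of_nonneg (by positivity)]
  -- step 1: rewrite the integrand as an inner integral of F
  have hstep1 : (∫ z in Set.Ioi (0:ℝ), Real.exp (-θ * z) *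
        (z ^ (α-1) * ∫ s in Set.Ioo (0:ℝ) 1, α * s ^ (α-1) * Real.exp (-(1-s) * z)))
      = ∫ z in Set.Ioi (0:ℝ), ∫ s in Set.Ioo (0:ℝ) 1, F z s := by
    refine setIntegral_congr_fun measurableSet_Ioi (fun z hz => ?_)
    have : Real.exp (-θ * z) * (z ^ (α-1) * ∫ s in Set.Ioo (0:ℝ) 1,
        α * s ^ (α-1) * Real.exp (-(1-s) * z))
        = ∫ s in Set.Ioo (0:ℝ) 1, (Real.exp (-θ * z) * z ^ (α-1)) *
            (α * s ^ (α-1) * Real.exp (-(1-s) * z)) := by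
      rw [integral_const_mul]; ring
    rw [this]
    refine setIntegral_congr_fun measurableSet_Ioo (fun s hs => ?_)
    have hexp : Real.exp (-θ * z) * Real.exp (-(1-s) * z) = Real.exp (-((θ+1-s) * z)) := by
      rw [← Real.exp_add]; congr 1; ring
    simp only [hF]
    linear_combination (z ^ (α-1) * (α * s ^ (α-1))) * hexp
  rw [hstep1, MeasureTheory.integral_integral_swap hint]
  rw [setIntegral_congr_fun measurableSet_Ioo hinner, integral_const_mul]

lemma Gval {α : ℝ} (hα0 : 0 < α) : Gfun α = α * Real.Gamma α := by
  have h := Real.integral_rpow_mul_exp_neg_mul_Ioi (a := α+1) (r := 1) (by linarith) one_pos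
  simp only [add_sub_cancel_right, one_mul, ne_eq, div_self, one_ne_zero, not_false_eq_true,
    Real.one_rpow, div_one] at h
  rw [Gfun, h, Real.Gamma_add_one hα0.ne']

lemma Cval {α : ℝ} (hα0 : 0 < α) (hα1 : α < 1) :
    Gfun α * (∫ w in Set.Ioi (0:ℝ), w ^ (-α) * (1 + w)⁻¹)
      = α * Real.Gamma α * (Real.pi / Real.sin (Real.pi * α)) := by
  rw [Gval hα0, Ival α]
  have h := betaValue (a := 1-α) (b := α) (by linarith) hα0
  rw [show (1:ℝ) - α - 1 = -α by ring, show (1:ℝ) - α + α = 1 by ring,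
    Real.Gamma_one, div_one] at h
  rw [h, mul_comm (Real.Gamma (1-α)) (Real.Gamma α), Real.Gamma_mul_Gamma_one_sub]

/-- `ρ` is a probability density on `(0,∞)` whose Laplace transform is the
arcsine distribution function `Λ⁰`. -/
theorem stmt_18 (α : ℝ) (hα : α ∈ Set.Ioo (0:ℝ) 1) :
    (∫ z in Set.Ioi (0:ℝ), rhoFun α z) = 1 ∧
    ∀ θ : ℝ, 0 < θ →
      (∫ z in Set.Ioi (0:ℝ), Real.exp (-θ * z) * rhoFun α z) = arcsineCDF α θ := by
  obtain ⟨hα0, hα1⟩ := hα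
  have hΓ : 0 < Real.Gamma α := Real.Gamma_pos_of_pos hα0
  have hπ : 0 < Real.pi := Real.pi_pos
  have hsin : 0 < Real.sin (Real.pi * α) :=
    Real.sin_pos_of_pos_of_lt_pi (by positivity) (mul_lt_of_lt_one_right hπ hα1)
  set C : ℝ := Gfun α * ∫ w in Set.Ioi (0:ℝ), w ^ (-α) * (1 + w)⁻¹ with hC
  have hCval : C = α * Real.Gamma α * (Real.pi / Real.sin (Real.pi * α)) := Cval hα0 hα1
  have hCne : C ≠ 0 := by rw [hCval]; positivity
  have hLap : ∀ θ : ℝ, 0 ≤ θ →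
      (∫ z in Set.Ioi (0:ℝ), Real.exp (-θ * z) * rhoFun α z)
        = C⁻¹ * (α * Real.Gamma α * ∫ s in Set.Ioo (0:ℝ) 1, s ^ (α-1) * (θ+1-s) ^ (-α)) := by
    intro θ hθ
    have hpt : ∀ z : ℝ, Real.exp (-θ * z) * rhoFun α z
        = C⁻¹ * (Real.exp (-θ * z) *
            (z ^ (α-1) * ∫ s in Set.Ioo (0:ℝ) 1, α * s ^ (α-1) * Real.exp (-(1-s) * z))) := by
      intro z; rw [rhoFun, ← hC]; ring
    simp only [hpt]
    rw [integral_const_mul, mainSwap hα0 hα1 θ hθ]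
  constructor
  · have h0 := hLap 0 le_rfl
    simp only [neg_zero, zero_mul, Real.exp_zero, one_mul, zero_add] at h0
    have hbeta : (∫ s in Set.Ioo (0:ℝ) 1, s ^ (α-1) * (1-s) ^ (-α))
        = Real.pi / Real.sin (Real.pi * α) := by
      have h := betaValue (a := α) (b := 1-α) hα0 (by linarith)
      rw [show (1:ℝ) - α - 1 = -α by ring, show α + (1 - α) = (1:ℝ) by ring,
        Real.Gamma_one, div_one] at h
      rw [h, Real.Gamma_mul_Gamma_one_sub]
    rw [h0, hbeta, ← hCval, inv_mul_cancel₀ hCne]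
  · intro θ hθ
    rw [hLap θ hθ.le, Esub α θ hθ, arcsineCDF]
    rw [hCval, show (α * Real.Gamma α * (Real.pi / Real.sin (Real.pi * α)))⁻¹ *
        (α * Real.Gamma α * ∫ u in Set.Ioo (θ/(1+θ)) 1, u ^ (-α) * (1-u) ^ (α-1))
      = ((α * Real.Gamma α) * (α * Real.Gamma α)⁻¹) * (Real.pi / Real.sin (Real.pi * α))⁻¹ *
        (∫ u in Set.Ioo (θ/(1+θ)) 1, u ^ (-α) * (1-u) ^ (α-1)) by
        rw [mul_inv]; ring]
    rw [mul_inv_cancel₀ (by positivity), one_mul, inv_div]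
end
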